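/- arXiv:1002.2260 — 11 statements merged into one kernel-verified Lean document; each statement's English description precedes it below -/
import Mathlib

section
/- Let K be a field of characteristic p > 0 and let E be an elliptic curve over K given by a Weierstrass equation with nonzero discriminant, whose j-invariant j(E) is nonzero and is a p-th power in K (i.e. j(E) = c^p for some c ∈ K). Then there exists an elliptic curve Ẽ over K (a Weierstrass curve over K with nonzero discriminant) such that E is isomorphic over K, via an admissible change of variables, to the curve Ẽ^(p) obtained from Ẽ by raising each Weierstrass coefficient to the p-th power. -/
/-- The Weierstrass curve obtained from `W` by raising each coefficient to the `p`-th power. -/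
def WeierstrassCurve.frobeniusImage {K : Type*} [CommRing K] (W : WeierstrassCurve K) (p : ℕ) :
    WeierstrassCurve K :=
  ⟨W.a₁ ^ p, W.a₂ ^ p, W.a₃ ^ p, W.a₄ ^ p, W.a₆ ^ p⟩

namespace WeierstrassCurveAux

open WeierstrassCurve

lemma frobeniusImage_eq_map {K : Type*} [Field K] (p : ℕ) [Fact p.Prime] [CharP K p]
    (W : WeierstrassCurve K) : W.frobeniusImage p = W.map (frobenius K p) := by
  rfl

lemma frobeniusImage_Δ {K : Type*} [Field K] (p : ℕ) [Fact p.Prime] [CharP K p]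
    (W : WeierstrassCurve K) : (W.frobeniusImage p).Δ = W.Δ ^ p := by
  rw [frobeniusImage_eq_map, WeierstrassCurve.map_Δ, frobenius_def]

lemma delta_ne_zero {K : Type*} [Field K] (p : ℕ) [Fact p.Prime] [CharP K p]
    (E E' : WeierstrassCurve K) [E.IsElliptic] (C : WeierstrassCurve.VariableChange K)
    (heq : C • E = E'.frobeniusImage p) : E'.Δ ≠ 0 := by
  have h1 : E'.Δ ^ p = (C • E).Δ := by rw [heq, frobeniusImage_Δ]
  have h2 : (C • E).Δ ≠ 0 := (C • E).isUnit_Δ.ne_zero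
  intro h
  rw [h, zero_pow (Fact.out : p.Prime).ne_zero] at h1
  exact h2 h1.symm

end WeierstrassCurveAux

open WeierstrassCurve WeierstrassCurveAux in
/-- If `E` is an elliptic curve over a field `K` of characteristic `p > 0` whose `j`-invariant is
nonzero and a `p`-th power in `K`, then `E` is isomorphic over `K` to `Ẽ⁽ᵖ⁾` for some elliptic
curve `Ẽ` over `K`. -/
theorem stmt0 {K : Type*} [Field K] (p : ℕ) [CharP K p] (hp : p ≠ 0)
    (E : WeierstrassCurve K) [E.IsElliptic] (hj : E.j ≠ 0) (c : K) (hc : E.j = c ^ p) :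
    ∃ E' : WeierstrassCurve K, E'.Δ ≠ 0 ∧
      ∃ C : WeierstrassCurve.VariableChange K,
        C • E = E'.frobeniusImage p := by
  have hP : p.Prime := CharP.char_prime_of_ne_zero K hp
  haveI : Fact p.Prime := ⟨hP⟩
  have hcne : c ≠ 0 := by
    intro h
    rw [h, zero_pow hp] at hc
    exact hj hc
  by_cases hp2 : p = 2
  · -- characteristic 2
    subst hp2
    obtain ⟨C₀, h₀⟩ := E.exists_variableChange_isCharTwoNF
    set E₀ := C₀ • E with hE₀def
    have hj₀ : E₀.j = E.j := E.variableChange_j C₀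
    rcases h₀ with _ | _
    · -- j ≠ 0 normal form
      have h2 : (2 : K) = 0 := by
        have := CharP.cast_eq_zero K 2; exact_mod_cast this
      have ha₁ : E₀.a₁ = 1 := E₀.a₁_of_isCharTwoJNeZeroNF
      have ha₃ : E₀.a₃ = 0 := E₀.a₃_of_isCharTwoJNeZeroNF
      have ha₄ : E₀.a₄ = 0 := E₀.a₄_of_isCharTwoJNeZeroNF
      have hb : E₀.a₆ = (c⁻¹) ^ 2 := by
        have h1 : E₀.j = 1 / E₀.a₆ := E₀.j_of_isCharTwoJNeZeroNF_of_char_two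
        have hΔ : E₀.Δ = E₀.a₆ := E₀.Δ_of_isCharTwoJNeZeroNF_of_char_two
        have hb0 : E₀.a₆ ≠ 0 := hΔ ▸ E₀.isUnit_Δ.ne_zero
        have h2' : (1 : K) / E₀.a₆ = c ^ 2 := by rw [← h1, hj₀, hc]
        field_simp at h2' ⊢
        linear_combination -h2'
      have heq : ((⟨1, 0, E₀.a₂, 0⟩ :
          WeierstrassCurve.VariableChange K) * C₀) • E =
          WeierstrassCurve.frobeniusImage ⟨1, E₀.a₂, 0, 0, c⁻¹⟩ 2 := by
        rw [mul_smul, ← hE₀def]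
        ext
        · show (1 : Kˣ)⁻¹.val * (E₀.a₁ + 2 * E₀.a₂) = 1 ^ 2
          rw [ha₁]; push_cast; ring_nf; linear_combination E₀.a₂ * h2
        · show ((1 : Kˣ)⁻¹.val) ^ 2 * (E₀.a₂ - E₀.a₂ * E₀.a₁ + 3 * 0 - E₀.a₂ ^ 2) = E₀.a₂ ^ 2
          rw [ha₁]; simp only [inv_one, Units.val_one]; linear_combination (-E₀.a₂^2) * h2
        · show ((1 : Kˣ)⁻¹.val) ^ 3 * (E₀.a₃ + 0 * E₀.a₁ + 2 * 0) = 0 ^ 2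
          rw [ha₃]; push_cast; ring
        · show ((1 : Kˣ)⁻¹.val) ^ 4 * (E₀.a₄ - E₀.a₂ * E₀.a₃ + 2 * 0 * E₀.a₂ -
            (0 + 0 * E₀.a₂) * E₀.a₁ + 3 * 0 ^ 2 - 2 * E₀.a₂ * 0) = 0 ^ 2
          rw [ha₃, ha₄]; push_cast; ring
        · show ((1 : Kˣ)⁻¹.val) ^ 6 * (E₀.a₆ + 0 * E₀.a₄ + 0 ^ 2 * E₀.a₂ + 0 ^ 3 - 0 * E₀.a₃ -
            0 ^ 2 - 0 * 0 * E₀.a₁) = (c⁻¹) ^ 2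
          rw [hb]; push_cast; ring
      exact ⟨⟨1, E₀.a₂, 0, 0, c⁻¹⟩, delta_ne_zero 2 E _ _ heq, _, heq⟩
    · -- j = 0 normal form: contradiction
      exact absurd (hj₀ ▸ E₀.j_of_isCharTwoJEqZeroNF_of_char_two) hj
  · by_cases hp3 : p = 3
    · -- characteristic 3
      subst hp3
      obtain ⟨C₀, h₀⟩ := E.exists_variableChange_isCharThreeNF
      set E₀ := C₀ • E with hE₀def
      have hj₀ : E₀.j = E.j := E.variableChange_j C₀
      rcases h₀ with _ | _
      · -- j ≠ 0 normal form
        have hΔ : E₀.Δ = -E₀.a₂ ^ 3 * E₀.a₆ := E₀.Δ_of_isCharThreeJNeZeroNF_of_char_three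
        have hΔne : E₀.Δ ≠ 0 := E₀.isUnit_Δ.ne_zero
        have ha : E₀.a₂ ≠ 0 := by intro h; rw [hΔ, h] at hΔne; simp at hΔne
        have hb0 : E₀.a₆ ≠ 0 := by intro h; rw [hΔ, h] at hΔne; simp at hΔne
        have hjf : E₀.j = -E₀.a₂ ^ 3 / E₀.a₆ := E₀.j_of_isCharThreeJNeZeroNF_of_char_three
        have hkey : c ^ 3 * E₀.a₆ = -E₀.a₂ ^ 3 := by
          rw [← hc, ← hj₀, hjf]; field_simp
        have ha₁ : E₀.a₁ = 0 := E₀.a₁_of_isCharThreeJNeZeroNF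
        have ha₃ : E₀.a₃ = 0 := E₀.a₃_of_isCharThreeJNeZeroNF
        have ha₄ : E₀.a₄ = 0 := E₀.a₄_of_isCharThreeJNeZeroNF
        have heq : ((⟨(Units.mk0 E₀.a₂ ha)⁻¹, 0, 0, 0⟩ :
            WeierstrassCurve.VariableChange K) * C₀) • E =
            WeierstrassCurve.frobeniusImage ⟨0, E₀.a₂, 0, 0, -E₀.a₂ ^ 3 / c⟩ 3 := by
          rw [mul_smul, ← hE₀def]
          ext
          · show ((Units.mk0 E₀.a₂ ha)⁻¹)⁻¹.val * (E₀.a₁ + 2 * 0) = 0 ^ 3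
            rw [ha₁]; simp
          · show (((Units.mk0 E₀.a₂ ha)⁻¹)⁻¹.val) ^ 2 *
              (E₀.a₂ - 0 * E₀.a₁ + 3 * 0 - 0 ^ 2) = E₀.a₂ ^ 3
            simp only [inv_inv, Units.val_mk0]; ring
          · show (((Units.mk0 E₀.a₂ ha)⁻¹)⁻¹.val) ^ 3 * (E₀.a₃ + 0 * E₀.a₁ + 2 * 0) = 0 ^ 3
            rw [ha₃]; simp
          · show (((Units.mk0 E₀.a₂ ha)⁻¹)⁻¹.val) ^ 4 * (E₀.a₄ - 0 * E₀.a₃ + 2 * 0 * E₀.a₂ -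
              (0 + 0 * 0) * E₀.a₁ + 3 * 0 ^ 2 - 2 * 0 * 0) = 0 ^ 3
            rw [ha₄]; simp
          · show (((Units.mk0 E₀.a₂ ha)⁻¹)⁻¹.val) ^ 6 * (E₀.a₆ + 0 * E₀.a₄ + 0 ^ 2 * E₀.a₂ +
              0 ^ 3 - 0 * E₀.a₃ - 0 ^ 2 - 0 * 0 * E₀.a₁) = (-E₀.a₂ ^ 3 / c) ^ 3
            simp only [inv_inv, Units.val_mk0]
            field_simp
            linear_combination hkey
        exact ⟨_, delta_ne_zero 3 E _ _ heq, _, heq⟩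
      · -- j = 0 normal form: contradiction
        exact absurd (hj₀ ▸ E₀.j_of_isShortNF_of_char_three) hj
    · -- characteristic ≥ 5
      have h2 : (2 : K) ≠ 0 := by
        intro h
        have h' : ((2 : ℕ) : K) = 0 := by exact_mod_cast h
        exact hp2 ((Nat.prime_dvd_prime_iff_eq hP Nat.prime_two).mp
          ((CharP.cast_eq_zero_iff K p 2).mp h'))
      have h3 : (3 : K) ≠ 0 := by
        intro h
        have h' : ((3 : ℕ) : K) = 0 := by exact_mod_cast h
        exact hp3 ((Nat.prime_dvd_prime_iff_eq hP Nat.prime_three).mp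
          ((CharP.cast_eq_zero_iff K p 3).mp h'))
      haveI := invertibleOfNonzero h2
      haveI := invertibleOfNonzero h3
      obtain ⟨C₀, h₀⟩ := E.exists_variableChange_isShortNF
      set E₀ := C₀ • E with hE₀def
      haveI : E₀.IsShortNF := h₀
      have hj₀ : E₀.j = E.j := E.variableChange_j C₀
      have hΔ : E₀.Δ = -16 * (4 * E₀.a₄ ^ 3 + 27 * E₀.a₆ ^ 2) := E₀.Δ_of_isShortNF
      have hΔne : E₀.Δ ≠ 0 := E₀.isUnit_Δ.ne_zero
      have hD : 4 * E₀.a₄ ^ 3 + 27 * E₀.a₆ ^ 2 ≠ 0 := by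
        intro h; rw [hΔ, h, mul_zero] at hΔne; exact hΔne rfl
      have hjf : E₀.j = 6912 * E₀.a₄ ^ 3 / (4 * E₀.a₄ ^ 3 + 27 * E₀.a₆ ^ 2) :=
        E₀.j_of_isShortNF
      have ha : E₀.a₄ ≠ 0 := by
        intro h
        apply hj
        rw [← hj₀, hjf, h]
        norm_num
      have hoddp : Odd p := hP.odd_of_ne_two hp2
      obtain ⟨k, hk⟩ := hoddp
      have hoddp : Odd p := ⟨k, hk⟩
      have ha₁ : E₀.a₁ = 0 := E₀.a₁_of_isShortNF
      have ha₂ : E₀.a₂ = 0 := E₀.a₂_of_isShortNF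
      have ha₃ : E₀.a₃ = 0 := E₀.a₃_of_isShortNF
      have hzp : (0 : K) ^ p = 0 := zero_pow hp
      by_cases hb : E₀.a₆ = 0
      · -- j = 1728 case
        have heq : ((⟨((Units.mk0 E₀.a₄ ha) ^ (k * (k + 1)))⁻¹, 0, 0, 0⟩ :
            WeierstrassCurve.VariableChange K) * C₀) • E =
            WeierstrassCurve.frobeniusImage ⟨0, 0, 0, E₀.a₄ ^ p, 0⟩ p := by
          rw [mul_smul, ← hE₀def]
          ext
          · show (((Units.mk0 E₀.a₄ ha) ^ (k * (k + 1)))⁻¹)⁻¹.val * (E₀.a₁ + 2 * 0) = 0 ^ p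
            rw [ha₁, hzp]; simp
          · show ((((Units.mk0 E₀.a₄ ha) ^ (k * (k + 1)))⁻¹)⁻¹.val) ^ 2 *
              (E₀.a₂ - 0 * E₀.a₁ + 3 * 0 - 0 ^ 2) = 0 ^ p
            rw [ha₂, hzp]; simp
          · show ((((Units.mk0 E₀.a₄ ha) ^ (k * (k + 1)))⁻¹)⁻¹.val) ^ 3 *
              (E₀.a₃ + 0 * E₀.a₁ + 2 * 0) = 0 ^ p
            rw [ha₃, hzp]; simp
          · show ((((Units.mk0 E₀.a₄ ha) ^ (k * (k + 1)))⁻¹)⁻¹.val) ^ 4 *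
              (E₀.a₄ - 0 * E₀.a₃ + 2 * 0 * E₀.a₂ - (0 + 0 * 0) * E₀.a₁ + 3 * 0 ^ 2 - 2 * 0 * 0)
              = (E₀.a₄ ^ p) ^ p
            simp only [inv_inv, Units.val_pow_eq_pow_val, Units.val_mk0]
            rw [← pow_mul, ← pow_mul]
            have : E₀.a₄ ^ (k * (k + 1) * 4) * (E₀.a₄ - 0 * E₀.a₃ + 2 * 0 * E₀.a₂ -
                (0 + 0 * 0) * E₀.a₁ + 3 * 0 ^ 2 - 2 * 0 * 0) = E₀.a₄ ^ (k * (k + 1) * 4 + 1) := by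
              ring
            rw [this, hk]
            congr 1
            ring
          · show ((((Units.mk0 E₀.a₄ ha) ^ (k * (k + 1)))⁻¹)⁻¹.val) ^ 6 *
              (E₀.a₆ + 0 * E₀.a₄ + 0 ^ 2 * E₀.a₂ + 0 ^ 3 - 0 * E₀.a₃ - 0 ^ 2 - 0 * 0 * E₀.a₁)
              = 0 ^ p
            rw [hb, hzp]; simp
        exact ⟨_, delta_ne_zero p E _ _ heq, _, heq⟩
      · -- j ≠ 1728 case
        obtain ⟨w, hwdef⟩ : ∃ w : K,
            w = -(31104 * E₀.a₄ * E₀.a₆ / (4 * E₀.a₄ ^ 3 + 27 * E₀.a₆ ^ 2)) := ⟨_, rfl⟩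
        have h31104 : (31104 : K) ≠ 0 := by
          have : (31104 : K) = 2 ^ 7 * 3 ^ 5 := by norm_num
          rw [this]
          exact mul_ne_zero (pow_ne_zero _ h2) (pow_ne_zero _ h3)
        have hw : w ≠ 0 := by
          rw [hwdef, neg_ne_zero, div_ne_zero_iff]
          exact ⟨mul_ne_zero (mul_ne_zero h31104 ha) hb, hD⟩
        have key4 : w ^ 2 * E₀.a₄ = -(3 * E₀.j * (E₀.j - 1728)) := by
          rw [hwdef, hjf]; rw [div_sub' hD]; field_simp; ring
        have key6 : w ^ 3 * E₀.a₆ = -(2 * E₀.j * (E₀.j - 1728) ^ 2) := by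
          rw [hwdef, hjf]; rw [div_sub' hD]; field_simp; ring
        have hcp : c ^ p = E₀.j := by rw [hj₀, hc]
        have h1728p : ((1728 : K)) ^ p = 1728 := by
          rw [← frobenius_def]; exact map_ofNat _ 1728
        have h3p : ((3 : K)) ^ p = 3 := by
          rw [← frobenius_def]; exact map_ofNat _ 3
        have h2p : ((2 : K)) ^ p = 2 := by
          rw [← frobenius_def]; exact map_ofNat _ 2
        have hsub : (c - 1728) ^ p = E₀.j - 1728 := by
          rw [sub_pow_char, hcp, h1728p]
        have heq : ((⟨((Units.mk0 w hw) ^ (k + 1))⁻¹, 0, 0, 0⟩ :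
            WeierstrassCurve.VariableChange K) * C₀) • E =
            WeierstrassCurve.frobeniusImage
              ⟨0, 0, 0, -(3 * c * (c - 1728) * w ^ 2), -(2 * c * (c - 1728) ^ 2 * w ^ 3)⟩ p := by
          rw [mul_smul, ← hE₀def]
          ext
          · show (((Units.mk0 w hw) ^ (k + 1))⁻¹)⁻¹.val * (E₀.a₁ + 2 * 0) = 0 ^ p
            rw [ha₁, hzp]; simp
          · show ((((Units.mk0 w hw) ^ (k + 1))⁻¹)⁻¹.val) ^ 2 *
              (E₀.a₂ - 0 * E₀.a₁ + 3 * 0 - 0 ^ 2) = 0 ^ p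
            rw [ha₂, hzp]; simp
          · show ((((Units.mk0 w hw) ^ (k + 1))⁻¹)⁻¹.val) ^ 3 *
              (E₀.a₃ + 0 * E₀.a₁ + 2 * 0) = 0 ^ p
            rw [ha₃, hzp]; simp
          · show ((((Units.mk0 w hw) ^ (k + 1))⁻¹)⁻¹.val) ^ 4 *
              (E₀.a₄ - 0 * E₀.a₃ + 2 * 0 * E₀.a₂ - (0 + 0 * 0) * E₀.a₁ + 3 * 0 ^ 2 - 2 * 0 * 0)
              = (-(3 * c * (c - 1728) * w ^ 2)) ^ p
            simp only [inv_inv, Units.val_pow_eq_pow_val, Units.val_mk0]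
            rw [hoddp.neg_pow, mul_pow, mul_pow, mul_pow, h3p, hcp, hsub, ← pow_mul, hk]
            linear_combination (w ^ (4 * k + 2)) * key4
          · show ((((Units.mk0 w hw) ^ (k + 1))⁻¹)⁻¹.val) ^ 6 *
              (E₀.a₆ + 0 * E₀.a₄ + 0 ^ 2 * E₀.a₂ + 0 ^ 3 - 0 * E₀.a₃ - 0 ^ 2 - 0 * 0 * E₀.a₁)
              = (-(2 * c * (c - 1728) ^ 2 * w ^ 3)) ^ p
            simp only [inv_inv, Units.val_pow_eq_pow_val, Units.val_mk0]
            rw [hoddp.neg_pow, mul_pow, mul_pow, mul_pow, h2p, hcp, pow_right_comm (c - 1728) 2 p, hsub,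
              ← pow_mul, hk]
            linear_combination (w ^ (6 * k + 3)) * key6
        exact ⟨_, delta_ne_zero p E _ _ heq, _, heq⟩
end

section
/- Let K be a field of characteristic p > 0 and let E be an elliptic curve over K (a Weierstrass curve with nonzero discriminant) with j-invariant j(E) = 0. Then there exists an elliptic curve Ẽ over K such that E is isomorphic over K, via an admissible change of variables, to the curve Ẽ^(p) obtained from Ẽ by raising each Weierstrass coefficient to the p-th power. -/
open WeierstrassCurve

lemma frobeniusImage_Δ {K : Type*} [CommRing K] (p : ℕ) [Fact p.Prime] [CharP K p]
    (W : WeierstrassCurve K) : (W.frobeniusImage p).Δ = W.Δ ^ p := by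
  have h : W.frobeniusImage p = W.map (frobenius K p) := by
    ext <;> simp [frobeniusImage, frobenius_def]
  rw [h, map_Δ, frobenius_def]

/-- If `E` is an elliptic curve over a field `K` of characteristic `p > 0` with `j`-invariant `0`,
then `E` is isomorphic over `K` to `Ẽ⁽ᵖ⁾` for some elliptic curve `Ẽ` over `K`. -/
theorem stmt1 {K : Type*} [Field K] (p : ℕ) [CharP K p] (hp : p ≠ 0)
    (E : WeierstrassCurve K) [E.IsElliptic] (hj : E.j = 0) :
    ∃ E' : WeierstrassCurve K, E'.Δ ≠ 0 ∧
      ∃ C : WeierstrassCurve.VariableChange K,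
        C • E = E'.frobeniusImage p := by
  have hprime : p.Prime := (CharP.char_is_prime_or_zero K p).resolve_right hp
  haveI : Fact p.Prime := ⟨hprime⟩
  have hΔ : E.Δ ≠ 0 := E.isUnit_Δ.ne_zero
  by_cases h2 : p = 2
  · subst h2
    have ha₁ : E.a₁ = 0 := E.j_eq_zero_iff_of_char_two.mp hj
    haveI := E.toCharTwoJEqZeroNF_spec ha₁
    set W' := E.toCharTwoJEqZeroNF • E with hW'
    have hΔ' : W'.Δ ≠ 0 := by
      rw [hW', variableChange_Δ]
      exact mul_ne_zero (pow_ne_zero _ (Units.ne_zero _)) hΔ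
    have hc : W'.a₃ ≠ 0 := by
      intro h
      rw [W'.Δ_of_isCharTwoJEqZeroNF_of_char_two, h] at hΔ'
      simp at hΔ'
    have h2 : (2 : K) = 0 := CharP.cast_eq_zero K 2
    have hA1 : W'.a₁ = 0 := W'.a₁_of_isCharTwoJEqZeroNF
    have hA2 : W'.a₂ = 0 := W'.a₂_of_isCharTwoJEqZeroNF
    set c := W'.a₃
    set a := W'.a₄
    set b := W'.a₆
    refine ⟨W'.frobeniusImage 2, by rw [frobeniusImage_Δ]; exact pow_ne_zero _ hΔ',
      (⟨Units.mk0 c⁻¹ (inv_ne_zero hc), a ^ 2 / c ^ 2, a / c,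
        b ^ 2 / c ^ 3 + b / c + a ^ 3 / c ^ 3⟩ : VariableChange K) * E.toCharTwoJEqZeroNF, ?_⟩
    rw [mul_smul, ← hW']
    have hu : ((Units.mk0 c⁻¹ (inv_ne_zero hc))⁻¹ : Kˣ) = (c⁻¹)⁻¹ := rfl
    have hpow : (c * c⁻¹) ^ 15 = (1 : K) := by rw [mul_inv_cancel₀ hc, one_pow]
    refine WeierstrassCurve.ext ?_ ?_ ?_ ?_ ?_ <;>
      simp only [variableChange_def, frobeniusImage, hu, inv_inv, hA1, hA2]
    · field_simp
      linear_combination a * h2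
    · field_simp
      linear_combination a ^ 2 * h2
    · field_simp
      linear_combination (c ^ 2 * b + a ^ 3 + b ^ 2) * h2
    · field_simp
      linear_combination (-(c ^ 2 * a * b) - a * b ^ 2) * h2
    · field_simp
      linear_combination (-(c ^ 2 * b * a ^ 3) - c ^ 2 * b ^ 3 - c ^ 4 * b ^ 2 - b ^ 2 * a ^ 3
        - b ^ 4) * h2
  · by_cases h3 : p = 3
    · subst h3
      have hb₂ : E.b₂ = 0 := E.j_eq_zero_iff_of_char_three.mp hj
      haveI := E.toShortNFOfCharThree_spec hb₂
      set W' := E.toShortNFOfCharThree • E with hW'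
      have hΔ' : W'.Δ ≠ 0 := by
        rw [hW', variableChange_Δ]
        exact mul_ne_zero (pow_ne_zero _ (Units.ne_zero _)) hΔ
      have ha : W'.a₄ ≠ 0 := by
        intro h
        rw [W'.Δ_of_isShortNF_of_char_three, h] at hΔ'
        simp at hΔ'
      have h3 : (3 : K) = 0 := CharP.cast_eq_zero K 3
      have hA1 : W'.a₁ = 0 := W'.a₁_of_isShortNF
      have hA2 : W'.a₂ = 0 := W'.a₂_of_isShortNF
      have hA3 : W'.a₃ = 0 := W'.a₃_of_isShortNF
      set a := W'.a₄
      set b := W'.a₆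
      have hu0 : ((a ^ 2)⁻¹ : K) ≠ 0 := inv_ne_zero (pow_ne_zero _ ha)
      have hpow : (a * a⁻¹) ^ 12 = (1 : K) := by rw [mul_inv_cancel₀ ha, one_pow]
      refine ⟨W'.frobeniusImage 3, by rw [frobeniusImage_Δ]; exact pow_ne_zero _ hΔ',
        (⟨Units.mk0 ((a ^ 2)⁻¹) hu0, a⁻¹ ^ 4 * b ^ 3 - a⁻¹ * b, 0, 0⟩ : VariableChange K) *
          E.toShortNFOfCharThree, ?_⟩
      rw [mul_smul, ← hW']
      have hu : (((Units.mk0 ((a ^ 2)⁻¹) hu0)⁻¹ : Kˣ) : K) = a ^ 2 := by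
        rw [show (((Units.mk0 ((a ^ 2)⁻¹) hu0)⁻¹ : Kˣ) : K) = ((a ^ 2)⁻¹)⁻¹ from rfl, inv_inv]
      have hq : a * a⁻¹ = 1 := mul_inv_cancel₀ ha
      refine WeierstrassCurve.ext ?_ ?_ ?_ ?_ ?_ <;>
        simp only [variableChange_def, frobeniusImage, hu, hA1, hA2, hA3]
      · ring1
      · linear_combination (a ^ 4 * (a⁻¹ ^ 4 * b ^ 3 - a⁻¹ * b)) * h3
      · ring1
      · linear_combination (a ^ 8 * (a⁻¹ ^ 4 * b ^ 3 - a⁻¹ * b) ^ 2) * h3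
      · linear_combination (-(a ^ 12 * a⁻¹ ^ 9 * b ^ 7) + a ^ 12 * a⁻¹ ^ 6 * b ^ 5) * h3
          + b ^ 9 * hpow + (a ^ 12 * a⁻¹ ^ 3 * b ^ 3 - a ^ 12 * b) * hq
    · -- p ≥ 5
      have h2K : (2 : K) ≠ 0 := by
        have := (CharP.cast_eq_zero_iff K p 2).not
        simp only [Nat.cast_ofNat] at this
        exact fun h => h2 ((Nat.prime_dvd_prime_iff_eq hprime Nat.prime_two).mp
          ((CharP.cast_eq_zero_iff K p 2).mp (by exact_mod_cast h)))
      have h3K : (3 : K) ≠ 0 := by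
        exact fun h => h3 ((Nat.prime_dvd_prime_iff_eq hprime Nat.prime_three).mp
          ((CharP.cast_eq_zero_iff K p 3).mp (by exact_mod_cast h)))
      haveI : Invertible (2 : K) := invertibleOfNonzero h2K
      haveI : Invertible (3 : K) := invertibleOfNonzero h3K
      haveI := E.toShortNF_spec
      set W' := E.toShortNF • E with hW'
      have hΔ' : W'.Δ ≠ 0 := by
        rw [hW', variableChange_Δ]
        exact mul_ne_zero (pow_ne_zero _ (Units.ne_zero _)) hΔ
      have hj' : W'.j = 0 := by
        have h := variableChange_j (C := E.toShortNF) (W := E)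
        rw [hj] at h
        exact h
      have hc₄ : W'.c₄ = 0 := by
        have := hj'
        rw [j, Units.mul_right_eq_zero, pow_eq_zero_iff (by norm_num)] at this
        exact this
      have ha₄ : W'.a₄ = 0 := by
        rw [c₄_of_isShortNF] at hc₄
        have h48 : (-48 : K) ≠ 0 := by
          have h : (-48 : K) = -(2 ^ 4 * 3) := by norm_num
          rw [h, neg_ne_zero]
          exact mul_ne_zero (pow_ne_zero _ h2K) h3K
        have := mul_eq_zero.mp (by linear_combination hc₄ : (-48 : K) * W'.a₄ = 0)
        tauto
      have hA1 : W'.a₁ = 0 := W'.a₁_of_isShortNF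
      have hA2 : W'.a₂ = 0 := W'.a₂_of_isShortNF
      have hA3 : W'.a₃ = 0 := W'.a₃_of_isShortNF
      set b := W'.a₆ with hb_def
      have hb : b ≠ 0 := by
        intro h
        rw [Δ_of_isShortNF, ha₄, ← hb_def, h] at hΔ'
        norm_num at hΔ'
      have hp2 : p % 2 = 1 := Nat.odd_iff.mp (hprime.odd_of_ne_two h2)
      have hp3 : p % 3 ≠ 0 := by
        intro h
        exact h3 ((Nat.prime_dvd_prime_iff_eq Nat.prime_three hprime).mp
          (Nat.dvd_of_mod_eq_zero h)).symm
      have h56 : p % 6 = 1 ∨ p % 6 = 5 := by omega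
      have hk : ∃ k, p * p = 6 * k + 1 := by
        rcases h56 with h | h
        · obtain ⟨q, hq6⟩ : ∃ q, p = 6 * q + 1 := ⟨p / 6, by omega⟩
          exact ⟨6 * q ^ 2 + 2 * q, by rw [hq6]; ring⟩
        · obtain ⟨q, hq6⟩ : ∃ q, p = 6 * q + 5 := ⟨p / 6, by omega⟩
          exact ⟨6 * q ^ 2 + 10 * q + 4, by rw [hq6]; ring⟩
      obtain ⟨k, hk⟩ := hk
      have hu0 : ((b ^ k)⁻¹ : K) ≠ 0 := inv_ne_zero (pow_ne_zero _ hb)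
      refine ⟨W'.frobeniusImage p, by rw [frobeniusImage_Δ]; exact pow_ne_zero _ hΔ',
        (⟨Units.mk0 ((b ^ k)⁻¹) hu0, 0, 0, 0⟩ : VariableChange K) * E.toShortNF, ?_⟩
      rw [mul_smul, ← hW']
      have hu : ((Units.mk0 ((b ^ k)⁻¹) hu0)⁻¹ : Kˣ) = (((b ^ k)⁻¹)⁻¹ : K) := rfl
      refine WeierstrassCurve.ext ?_ ?_ ?_ ?_ ?_ <;>
        simp only [variableChange_def, frobeniusImage, hu, inv_inv, hA1, hA2, hA3, ha₄] <;>
        first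
        | (rw [zero_pow hp, zero_pow hp]; ring1)
        | (rw [← hb_def, ← pow_mul b p p, hk]; ring1)
end

section
/- Let k be a perfect field of characteristic 2, let a₂, a₆ ∈ k with a₆ ≠ 0, and let W be the elliptic curve over k given by Y² + XY = X³ + a₂X² + a₆. Then W has a k-rational point of order 4 if and only if there exists b ∈ k with a₂ = b² + b. -/
open WeierstrassCurve.Affine WeierstrassCurve.Affine.Point

open Classical in
/-- Over a perfect field `k` of characteristic `2`, the elliptic curve
`Y² + XY = X³ + a₂X² + a₆` (with `a₆ ≠ 0`) has a `k`-rational point of order `4` if and only if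
`a₂ = b² + b` for some `b ∈ k`. -/
theorem stmt5 {k : Type*} [Field k] [CharP k 2] [PerfectField k]
    (a₂ a₆ : k) (ha₆ : a₆ ≠ 0) :
    (∃ P : (WeierstrassCurve.mk 1 a₂ 0 0 a₆ : WeierstrassCurve k).toAffine.Point,
        addOrderOf P = 4) ↔
      ∃ b : k, a₂ = b ^ 2 + b := by
  have h2 : (2 : k) = 0 := by exact_mod_cast CharP.cast_eq_zero k 2
  set W : WeierstrassCurve.Affine k := (WeierstrassCurve.mk 1 a₂ 0 0 a₆ : WeierstrassCurve k).toAffine with hW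
  constructor
  · rintro ⟨P, hP⟩
    have h4 : (4 : ℕ) • P = 0 := by rw [← hP]; exact addOrderOf_nsmul_eq_zero P
    have h2ne : (2 : ℕ) • P ≠ 0 := by
      intro h
      have := addOrderOf_dvd_of_nsmul_eq_zero h
      rw [hP] at this
      norm_num at this
    rw [show (4 : ℕ) = 2 * 2 from rfl, mul_nsmul, two_nsmul, two_nsmul] at h4
    rw [two_nsmul] at h2ne
    rcases hPP : P + P with _ | @⟨x₀, y₀, h₀⟩
    · exact absurd hPP h2ne
    rw [hPP] at h4
    have hy₀ : y₀ = W.negY x₀ y₀ := by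
      by_contra hne
      rw [add_self_of_Y_ne hne] at h4
      exact some_ne_zero _ h4
    have hx₀ : x₀ = 0 := by
      rw [negY] at hy₀
      have hy₀' : y₀ = -y₀ - 1 * x₀ - 0 := hy₀
      linear_combination hy₀' - y₀ * h2
    rcases P with _ | @⟨x, y, h⟩
    · exact (some_ne_zero h₀ hPP.symm).elim
    have hy_ne : y ≠ W.negY x y := by
      intro hy
      rw [add_self_of_Y_eq hy] at hPP
      exact (some_ne_zero h₀ hPP.symm).elim
    rw [add_self_of_Y_ne hy_ne] at hPP
    injection hPP with hx hrest
    refine ⟨W.slope x x y y, ?_⟩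
    rw [hx₀] at hx
    have hx' : (W.slope x x y y) ^ 2 + 1 * (W.slope x x y y) - a₂ - x - x = 0 := hx
    linear_combination -hx' - x * h2
  · rintro ⟨b, hb⟩
    obtain ⟨r, hr⟩ := surjective_frobenius k 2 a₆
    obtain ⟨x, hx⟩ := surjective_frobenius k 2 r
    rw [frobenius_def] at hr hx
    have hx4 : x ^ 4 = a₆ := by rw [show (4:ℕ) = 2*2 from rfl, pow_mul, hx, hr]
    have hxne : x ≠ 0 := by
      intro h; rw [h] at hx4; simp at hx4; exact ha₆ hx4.symm
    set y : k := b * x + x ^ 2 with hy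
    have heq : W.Equation x y := by
      rw [equation_iff]
      show y ^ 2 + 1 * x * y + 0 * y = x ^ 3 + a₂ * x ^ 2 + 0 * x + a₆
      rw [hy]
      linear_combination hx4 - x ^ 2 * hb + b * x ^ 3 * h2
    have hns : W.Nonsingular x y := by
      rw [nonsingular_iff]
      refine ⟨heq, Or.inr ?_⟩
      show y ≠ -y - 1 * x - 0
      intro hE
      exact hxne (by linear_combination hE - y * h2)
    have hy_ne : y ≠ W.negY x y := by
      rw [negY]
      show y ≠ -y - 1 * x - 0
      intro hE
      exact hxne (by linear_combination hE - y * h2)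
    set P : W.Point := some _ _ hns with hPdef
    have hℓ : W.slope x x y y = b := by
      rw [slope_of_Y_ne rfl hy_ne]
      rw [negY]
      show (3 * x ^ 2 + 2 * a₂ * x + 0 - 1 * y) / (y - (-y - 1 * x - 0)) = b
      have hden : y - (-y - 1 * x - 0) = x := by linear_combination y * h2
      rw [hden, div_eq_iff hxne, hy]
      linear_combination (x ^ 2 + a₂ * x + b * x + x * y - 2 * b * x - b * x ^ 2 - x ^ 3) * h2
    have hQ := nonsingular_add hns hns (fun hxy => hy_ne hxy.2)
    have h2P : P + P = some _ _ hQ := add_self_of_Y_ne hy_ne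
    set x₂ : k := W.addX x x (W.slope x x y y) with hx₂def
    set y₂ : k := W.addY x x y (W.slope x x y y) with hy₂def
    have hx₂ : x₂ = 0 := by
      rw [hx₂def, hℓ]
      show b ^ 2 + 1 * b - a₂ - x - x = 0
      linear_combination -hb - x * h2
    have hy₂ : y₂ = W.negY x₂ y₂ := by
      rw [negY]
      show y₂ = -y₂ - 1 * x₂ - 0
      linear_combination y₂ * h2 + hx₂
    refine ⟨P, ?_⟩
    haveI : Fact (Nat.Prime 2) := ⟨by norm_num⟩
    have h1 : ¬ (2 ^ 1 : ℕ) • P = 0 := by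
      rw [pow_one, two_nsmul, h2P]
      exact some_ne_zero hQ
    have hfin : (2 ^ (1 + 1) : ℕ) • P = 0 := by
      rw [show (2 ^ (1+1) : ℕ) = 2 * 2 from rfl, mul_nsmul, two_nsmul, two_nsmul, h2P]
      exact add_of_Y_eq rfl hy₂
    simpa using addOrderOf_eq_prime_pow h1 hfin
end

section
/- Let k be a field of characteristic 2, let a₂, a₆ ∈ k with a₆ ≠ 0, and suppose t, b ∈ k satisfy t⁴ = a₆ and b² + b = a₂. Then the affine point (t, t² + bt) on the elliptic curve Y² + XY = X³ + a₂X² + a₆ over k is a k-rational point of order 4. -/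
open WeierstrassCurve.Affine WeierstrassCurve.Affine.Point

open Classical in
/-- Over a field `k` of characteristic `2`, if `t⁴ = a₆ ≠ 0` and `b² + b = a₂`, then the point
`(t, t² + bt)` on the elliptic curve `Y² + XY = X³ + a₂X² + a₆` is a `k`-rational point of
order `4`. -/
theorem stmt6 {k : Type*} [Field k] [CharP k 2] (a₂ a₆ t b : k) (ha₆ : a₆ ≠ 0)
    (ht : t ^ 4 = a₆) (hb : b ^ 2 + b = a₂) :
    ∃ h : (WeierstrassCurve.mk 1 a₂ 0 0 a₆ : WeierstrassCurve k).toAffine.Nonsingular t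
        (t ^ 2 + b * t),
      addOrderOf (WeierstrassCurve.Affine.Point.some _ _ h) = 4 := by
  have h2 : (2 : k) = 0 := by
    have := CharP.cast_eq_zero k 2
    exact_mod_cast this
  set W : WeierstrassCurve.Affine k :=
    (WeierstrassCurve.mk 1 a₂ 0 0 a₆ : WeierstrassCurve k).toAffine with hW
  have ht0 : t ≠ 0 := fun h0 => ha₆ (by rw [← ht, h0]; ring)
  have hy_ne : (t ^ 2 + b * t) ≠ W.negY t (t ^ 2 + b * t) := by
    simp only [hW, WeierstrassCurve.Affine.negY]
    intro heq
    apply ht0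
    linear_combination heq - (t ^ 2 + b * t) * h2
  have h : W.Nonsingular t (t ^ 2 + b * t) := by
    rw [WeierstrassCurve.Affine.nonsingular_iff, WeierstrassCurve.Affine.equation_iff]
    refine ⟨?_, Or.inr ?_⟩
    · show (t ^ 2 + b * t) ^ 2 + 1 * t * (t ^ 2 + b * t) + 0 * (t ^ 2 + b * t)
        = t ^ 3 + a₂ * t ^ 2 + 0 * t + a₆
      linear_combination ht + t ^ 2 * hb + b * t ^ 3 * h2
    · intro heq
      apply ht0
      show t = 0
      linear_combination heq - (t ^ 2 + b * t) * h2
  refine ⟨h, ?_⟩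
  set P : W.Point := Point.some _ _ h with hP
  have h2P : P + P = Point.some _ _ (nonsingular_add h h fun hxy => hy_ne hxy.2) :=
    add_self_of_Y_ne hy_ne
  set L : k := W.slope t t (t ^ 2 + b * t) (t ^ 2 + b * t) with hL
  have hLval : L = b := by
    rw [hL, slope_of_Y_ne rfl hy_ne]
    simp only [hW, WeierstrassCurve.Affine.negY]
    rw [div_eq_iff (by intro hz; apply ht0; linear_combination hz - (t^2+b*t)*h2)]
    linear_combination (t ^ 2 - b * t + a₂ * t - t * b ^ 2 - t ^ 2 * b) * h2
  have hx₃ : W.addX t t L = 0 := by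
    simp only [hW, WeierstrassCurve.Affine.addX, hLval]
    linear_combination -hb + (b - t + b ^ 2 - a₂) * h2
  have hy₃ : W.addY t t (t ^ 2 + b * t) L
      = W.negY (W.addX t t L) (W.addY t t (t ^ 2 + b * t) L) := by
    simp only [hW, WeierstrassCurve.Affine.negY]
    linear_combination (W.addY t t (t ^ 2 + b * t) L + W.addX t t L) * h2
      - (1 : k) * hx₃
  have h4 : Point.some _ _ (nonsingular_add h h fun hxy => hy_ne hxy.2)
      + Point.some _ _ (nonsingular_add h h fun hxy => hy_ne hxy.2) = 0 :=
    add_self_of_Y_eq hy₃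
  have h2Pne : P + P ≠ 0 := by
    rw [h2P]; exact some_ne_zero _
  have := Fact.mk Nat.prime_two
  refine addOrderOf_eq_prime_pow (p := 2) (n := 1) ?_ ?_
  · rw [pow_one, two_nsmul]; exact h2Pne
  · show (2 ^ 2 : ℕ) • P = 0
    rw [show (2 ^ 2 : ℕ) = 2 + 2 from rfl, add_nsmul, two_nsmul, h2P, h4]
end

section
/- Let k be a field of characteristic 3 and let δ ∈ k with δ ≠ 0. Then the affine point (δ, δ) on the elliptic curve Y² = X³ + X² − δ³ over k is a k-rational point of order 3. -/
open WeierstrassCurve.Affine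

open Classical in
/-- Over a field `k` of characteristic `3` with `δ ≠ 0`, the point `(δ, δ)` on the elliptic curve
`Y² = X³ + X² - δ³` is a `k`-rational point of order `3`. -/
theorem stmt8 {k : Type*} [Field k] [CharP k 3] (δ : k) (hδ : δ ≠ 0) :
    ∃ h : (WeierstrassCurve.mk 0 1 0 0 (-δ ^ 3) : WeierstrassCurve k).toAffine.Nonsingular δ δ,
      addOrderOf (WeierstrassCurve.Affine.Point.some _ _ h) = 3 := by
  have h3 : (3 : k) = 0 := CharP.cast_eq_zero k 3
  have h2 : (2 : k) ≠ 0 := by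
    intro h
    have := CharP.cast_eq_zero k 3
    push_cast at this
    have : (1 : k) = 0 := by linear_combination this - h
    exact one_ne_zero this
  set W : WeierstrassCurve.Affine k :=
    (WeierstrassCurve.mk 0 1 0 0 (-δ ^ 3) : WeierstrassCurve k).toAffine with hW
  have hne : δ ≠ W.negY δ δ := by
    simp only [hW, negY]
    intro h
    apply hδ
    have : 2 * δ = 0 := by linear_combination h
    exact (mul_eq_zero.mp this).resolve_left h2
  have h : W.Nonsingular δ δ := by
    rw [nonsingular_iff, equation_iff]
    exact ⟨by ring, Or.inr hne⟩
  refine ⟨h, ?_⟩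
  have hp : Fact (Nat.Prime 3) := ⟨by norm_num⟩
  have hL : W.slope δ δ δ δ = 1 := by
    rw [slope_of_Y_ne rfl hne]
    simp only [hW, negY]
    rw [div_eq_one_iff_eq (by intro hc; exact hδ ((mul_eq_zero.mp
      (show (2:k) * δ = 0 by linear_combination hc)).resolve_left h2))]
    linear_combination δ ^ 2 * h3
  have hx : W.addX δ δ (W.slope δ δ δ δ) = δ := by
    rw [hL]; simp only [hW, addX]; linear_combination -δ * h3
  have hy : W.addY δ δ δ (W.slope δ δ δ δ) = W.negY δ δ := by
    rw [addY, negAddY, hx, sub_self, mul_zero, zero_add]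
  apply addOrderOf_eq_prime
  · show (3 : ℕ) • _ = 0
    rw [show (3 : ℕ) • Point.some _ _ h = Point.some _ _ h + Point.some _ _ h + Point.some _ _ h by
      rw [succ_nsmul, two_nsmul]]
    rw [Point.add_self_of_Y_ne hne]
    exact Point.add_of_Y_eq hx hy
  · exact Point.some_ne_zero h
end

section
/- Let k be a perfect field of characteristic 3, let a₆ ∈ k with a₆ ≠ 0, and let W be the elliptic curve over k given by Y² = X³ + X² + a₆. Then W has a k-rational point of order 9 if and only if there exists u ∈ k with a₆ = u³ − u. -/
namespace Stmt9Aux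
open WeierstrassCurve WeierstrassCurve.Affine WeierstrassCurve.Affine.Point
open Classical

variable {k : Type*} [Field k]

private abbrev Wc (a₆ : k) : WeierstrassCurve.Affine k :=
  (WeierstrassCurve.mk 0 1 0 0 a₆ : WeierstrassCurve k).toAffine

lemma Wa₁ (a₆ : k) : (Wc a₆).a₁ = 0 := rfl
lemma Wa₂ (a₆ : k) : (Wc a₆).a₂ = 1 := rfl
lemma Wa₃ (a₆ : k) : (Wc a₆).a₃ = 0 := rfl
lemma Wa₄ (a₆ : k) : (Wc a₆).a₄ = 0 := rfl
lemma Wa₆ (a₆ : k) : (Wc a₆).a₆ = a₆ := rfl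

lemma negY_eq (a₆ x y : k) : (Wc a₆).negY x y = -y := by
  rw [negY, Wa₁, Wa₃]; ring

lemma equation_iff'' {a₆ x y : k} : (Wc a₆).Equation x y ↔ y ^ 2 = x ^ 3 + x ^ 2 + a₆ := by
  rw [equation_iff, Wa₁, Wa₂, Wa₃, Wa₄, Wa₆]
  constructor <;> intro h <;> linear_combination h

lemma two_ne (h3 : (3 : k) = 0) : (2 : k) ≠ 0 := fun h =>
  one_ne_zero (α := k) (by linear_combination h3 - h)

lemma some_eq_some {W : WeierstrassCurve.Affine k} {x₁ y₁ x₂ y₂ : k} {h₁ : W.Nonsingular x₁ y₁}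
    {h₂ : W.Nonsingular x₂ y₂} (hx : x₁ = x₂) (hy : y₁ = y₂) :
    Point.some _ _ h₁ = Point.some _ _ h₂ := by subst hx; subst hy; rfl

lemma some_inj {W : WeierstrassCurve.Affine k} {x₁ y₁ x₂ y₂ : k} {h₁ : W.Nonsingular x₁ y₁}
    {h₂ : W.Nonsingular x₂ y₂} (h : Point.some _ _ h₁ = Point.some _ _ h₂) : x₁ = x₂ ∧ y₁ = y₂ := by
  injection h with h1 h2
  exact ⟨h1, h2⟩

lemma nonsing {a₆ x y : k} (h3 : (3 : k) = 0) (heq : y ^ 2 = x ^ 3 + x ^ 2 + a₆) (hy : y ≠ 0) :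
    (Wc a₆).Nonsingular x y := by
  rw [nonsingular_iff']
  refine ⟨equation_iff''.2 heq, Or.inr ?_⟩
  rw [Wa₁, Wa₃]
  intro hc
  exact hy (by linear_combination 2 * hc - y * h3)

lemma Y_ne_negY {a₆ x y : k} (h3 : (3 : k) = 0) (hy : y ≠ 0) : y ≠ (Wc a₆).negY x y := by
  rw [negY_eq]
  intro hc
  exact hy (by linear_combination 2 * hc - y * h3)

/-- doubling with canonical coordinates -/
lemma double_eq {a₆ x y : k} (h3 : (3 : k) = 0) (h : (Wc a₆).Nonsingular x y) (hy : y ≠ 0) :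
    ∃ h' : (Wc a₆).Nonsingular ((x / y) ^ 2 - 1 - 2 * x)
      (-((x / y) * ((x / y) ^ 2 - 1 - 2 * x - x) + y)),
      Point.some _ _ h + Point.some _ _ h = Point.some _ _ h' := by
  have hy' : y ≠ (Wc a₆).negY x y := Y_ne_negY h3 hy
  have hL : (Wc a₆).slope x x y y = x / y := by
    rw [slope_of_Y_ne rfl hy', negY_eq, Wa₁, Wa₂, Wa₄]
    rw [div_eq_div_iff (by intro hc; exact hy (by linear_combination 2 * hc - y * h3)) hy]
    linear_combination x ^ 2 * y * h3
  have hX : (Wc a₆).addX x x ((Wc a₆).slope x x y y) = (x / y) ^ 2 - 1 - 2 * x := by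
    rw [addX, hL, Wa₁, Wa₂]; ring
  have hY : (Wc a₆).addY x x y ((Wc a₆).slope x x y y)
      = -((x / y) * ((x / y) ^ 2 - 1 - 2 * x - x) + y) := by
    rw [addY, negY_eq, negAddY, hX, hL]
  have hns := nonsingular_add h h fun h => hy' h.2
  rw [hX, hY] at hns
  exact ⟨hns, (add_self_of_Y_ne hy').trans (some_eq_some hX hY)⟩

/-- addition with distinct x-coordinates, canonical coordinates -/
lemma addp_eq {a₆ x₁ y₁ x₂ y₂ : k} (h₁ : (Wc a₆).Nonsingular x₁ y₁)
    (h₂ : (Wc a₆).Nonsingular x₂ y₂) (hx : x₁ ≠ x₂) :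
    ∃ h' : (Wc a₆).Nonsingular (((y₁ - y₂) / (x₁ - x₂)) ^ 2 - 1 - x₁ - x₂)
      (-(((y₁ - y₂) / (x₁ - x₂)) * ((((y₁ - y₂) / (x₁ - x₂)) ^ 2 - 1 - x₁ - x₂) - x₁) + y₁)),
      Point.some _ _ h₁ + Point.some _ _ h₂ = Point.some _ _ h' := by
  have hL : (Wc a₆).slope x₁ x₂ y₁ y₂ = (y₁ - y₂) / (x₁ - x₂) := slope_of_X_ne hx
  have hX : (Wc a₆).addX x₁ x₂ ((Wc a₆).slope x₁ x₂ y₁ y₂)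
      = ((y₁ - y₂) / (x₁ - x₂)) ^ 2 - 1 - x₁ - x₂ := by
    rw [addX, hL, Wa₁, Wa₂]; ring
  have hY : (Wc a₆).addY x₁ x₂ y₁ ((Wc a₆).slope x₁ x₂ y₁ y₂)
      = -(((y₁ - y₂) / (x₁ - x₂)) * ((((y₁ - y₂) / (x₁ - x₂)) ^ 2 - 1 - x₁ - x₂) - x₁) + y₁) := by
    rw [addY, negY_eq, negAddY, hX, hL]
  have hns := nonsingular_add h₁ h₂ fun h => (hx h.1).elim
  rw [hX, hY] at hns
  exact ⟨hns, (add_of_X_ne hx).trans (some_eq_some hX hY)⟩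


lemma backward [CharP k 3] [PerfectField k] (a₆ : k) (ha₆ : a₆ ≠ 0) (u : k)
    (hu : a₆ = u ^ 3 - u) : ∃ P : (Wc a₆).Point, addOrderOf P = 9 := by
  have h3 : (3 : k) = 0 := CharP.cast_eq_zero k 3
  have hcube : ∀ w : k, ((frobeniusEquiv k 3).symm w) ^ 3 = w := fun w => by
    simpa [frobeniusEquiv_apply] using (frobeniusEquiv k 3).apply_symm_apply w
  set v : k := (frobeniusEquiv k 3).symm ((frobeniusEquiv k 3).symm u) with hv
  have hv9 : v ^ 9 = u := by
    have : (v ^ 3) ^ 3 = u := by rw [hv, hcube]; exact hcube u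
    linear_combination this
  have ha' : a₆ = v ^ 27 - v ^ 9 := by rw [hu, ← hv9]; ring
  have hw9 : a₆ = (v ^ 3 - v) ^ 9 := by
    rw [ha']
    linear_combination ((-3)*v^11 + (12)*v^13 + (-28)*v^15 + (42)*v^17 + (-42)*v^19 + (28)*v^21 + (-12)*v^23 + (3)*v^25) * h3
  have hvv : v ^ 3 - v ≠ 0 := fun hc => ha₆ (by rw [hw9, hc]; norm_num)
  have hv0 : v ≠ 0 := fun h => hvv (by rw [h]; ring)
  have hv1 : v - 1 ≠ 0 := fun h => hvv (by
    have : v = 1 := by linear_combination h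
    rw [this]; ring)
  have hvm1 : v + 1 ≠ 0 := fun h => hvv (by
    have : v = -1 := by linear_combination h
    rw [this]; ring)
  set X1 : k := v^2 + v^5 - v^6 - v^9 with hX1d
  set Y1 : k := -v^2 + v^4 - v^5 + v^7 with hY1d
  set X2 : k := v^4 + v^5 - v^6 - v^9 with hX2d
  set Y2 : k := -v^4 + v^5 + v^6 - v^7 with hY2d
  set x0 : k := v^3 - v^9 with hx0d
  have hY1 : Y1 ≠ 0 := by
    rw [hY1d, show -v^2 + v^4 - v^5 + v^7 = v^2*(v-1)*(v+1)^4 by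
      linear_combination (v^3 + v^4 + (-1)*v^5 + (-1)*v^6) * h3]
    exact mul_ne_zero (mul_ne_zero (pow_ne_zero 2 hv0) hv1) (pow_ne_zero 4 hvm1)
  have heq1 : Y1 ^ 2 = X1 ^ 3 + X1 ^ 2 + a₆ := by
    rw [ha', hY1d, hX1d]
    linear_combination ((-1)*v^6 + v^8 + (-2)*v^9 + v^10 + (2)*v^11 + (-2)*v^12 + (3)*v^13 + (-1)*v^15 + (3)*v^16 + (-3)*v^17 + v^19 + (-3)*v^20 + v^21 + (-1)*v^23 + v^24) * h3
  have h1 : (Wc a₆).Nonsingular X1 Y1 := nonsing h3 heq1 hY1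
  obtain ⟨h2', e2⟩ := double_eq h3 h1 hY1
  have hX2e : (X1 / Y1) ^ 2 - 1 - 2 * X1 = X2 := by
    have hA : -1 + v^2 - v^3 + v^5 ≠ 0 := fun hc => hY1 (by rw [hY1d]; linear_combination v^2 * hc)
    simp only [hX1d, hY1d, hX2d, hY2d, hx0d]
    field_simp
    linear_combination ((-1)*v^5 + (1)*v^6 + (2)*v^7 + (-4)*v^8 + (2)*v^9 + (5)*v^10 + (-7)*v^11 + (1)*v^12 + (5)*v^13 + (-6)*v^14 + (3)*v^16 + (-2)*v^17 + (1)*v^19) * h3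
  have hY2e : -((X1 / Y1) * ((X1 / Y1) ^ 2 - 1 - 2 * X1 - X1) + Y1) = Y2 := by
    have hA : -1 + v^2 - v^3 + v^5 ≠ 0 := fun hc => hY1 (by rw [hY1d]; linear_combination v^2 * hc)
    simp only [hX1d, hY1d, hX2d, hY2d, hx0d]
    field_simp
    linear_combination ((1)*v^5 + (-1)*v^6 + (-2)*v^7 + (5)*v^8 + (-4)*v^9 + (-6)*v^10 + (13)*v^11 + (-8)*v^12 + (-7)*v^13 + (20)*v^14 + (-12)*v^15 + (-5)*v^16 + (18)*v^17 + (-13)*v^18 + (-3)*v^19 + (10)*v^20 + (-8)*v^21 + (-1)*v^22 + (4)*v^23 + (-2)*v^24 + (1)*v^26) * h3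
  rw [hY2e, hX2e] at h2'
  have e2n : Point.some _ _ h1 + Point.some _ _ h1 = Point.some _ _ h2' := e2.trans (some_eq_some hX2e hY2e)
  have hne : X2 - X1 ≠ 0 := by
    rw [show X2 - X1 = v^2*(v-1)*(v+1) by rw [hX2d, hX1d]; ring]
    exact mul_ne_zero (mul_ne_zero (pow_ne_zero 2 hv0) hv1) hvm1
  have hx12 : X1 ≠ X2 := fun h => hne (by rw [h]; ring)
  obtain ⟨h3', e3⟩ := addp_eq h1 h2' hx12
  have hd12 : X1 - X2 ≠ 0 := fun h => hne (by linear_combination -h)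
  have hden : v ^ 2 - v ^ 4 ≠ 0 := by
    intro hc
    exact hne (by rw [hX2d, hX1d]; linear_combination -hc)
  have hX3e : ((Y1 - Y2) / (X1 - X2)) ^ 2 - 1 - X1 - X2 = x0 := by
    have hC : 1 + v^3 - v^4 - v^7 - v^2*(1+v-v^2-v^5) ≠ 0 := fun hc => hden (by linear_combination v^2 * hc)
    simp only [hX1d, hY1d, hX2d, hY2d, hx0d]
    field_simp [hden]
    linear_combination ((-1)*v^2 + (1)*v^3 + (2)*v^4 + (-4)*v^5 + (1)*v^6 + (5)*v^7 + (-4)*v^8 + (-1)*v^9 + (2)*v^10 + (-2)*v^11 + (1)*v^13) * h3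
  have hY3e : -(((Y1 - Y2) / (X1 - X2)) * ((((Y1 - Y2) / (X1 - X2)) ^ 2 - 1 - X1 - X2) - X1) + Y1) = x0 := by
    have hC : 1 + v^3 - v^4 - v^7 - v^2*(1+v-v^2-v^5) ≠ 0 := fun hc => hden (by linear_combination v^2 * hc)
    simp only [hX1d, hY1d, hX2d, hY2d, hx0d]
    field_simp [hden]
    linear_combination ((-1)*v^2 + (1)*v^3 + (4)*v^4 + (-9)*v^5 + (-1)*v^6 + (23)*v^7 + (-18)*v^8 + (-19)*v^9 + (35)*v^10 + (-7)*v^11 + (-24)*v^12 + (19)*v^13 + (1)*v^14 + (-9)*v^15 + (6)*v^16 + (1)*v^17 + (-2)*v^18) * h3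
  rw [hY3e, hX3e] at h3'
  have e3n : Point.some _ _ h1 + Point.some _ _ h2' = Point.some _ _ h3' := e3.trans (some_eq_some hX3e hY3e)
  have hQ3 : (3 : ℕ) • Point.some _ _ h1 = Point.some _ _ h3' := by
    rw [show (3:ℕ) = 2 + 1 from rfl, add_nsmul, two_nsmul, one_nsmul, e2n, add_comm]
    exact e3n
  have hx0ne : x0 ≠ 0 := by
    rw [hx0d, show v^3 - v^9 = -(v^3-v)^3 by linear_combination (v^5 + (-1)*v^7) * h3]
    exact neg_ne_zero.2 (pow_ne_zero 3 hvv)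
  obtain ⟨hr2', er2⟩ := double_eq h3 h3' hx0ne
  have hXr : (x0 / x0) ^ 2 - 1 - 2 * x0 = x0 := by
    rw [div_self hx0ne]
    linear_combination (-x0) * h3
  have hYr : -((x0 / x0) * ((x0 / x0) ^ 2 - 1 - 2 * x0 - x0) + x0) = -x0 := by
    rw [div_self hx0ne]
    linear_combination x0 * h3
  rw [hYr, hXr] at hr2'
  have er2n : Point.some _ _ h3' + Point.some _ _ h3' = Point.some _ _ hr2' := er2.trans (some_eq_some hXr hYr)
  have hcancel : Point.some _ _ h3' + Point.some _ _ hr2' = 0 :=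
    add_of_Y_eq rfl (by rw [negY_eq]; ring)
  have h3R : (3 : ℕ) • Point.some _ _ h3' = 0 := by
    rw [show (3:ℕ) = 2 + 1 from rfl, add_nsmul, two_nsmul, one_nsmul, er2n, add_comm]
    exact hcancel
  have hfact : Fact (Nat.Prime 3) := ⟨by norm_num⟩
  refine ⟨Point.some _ _ h1, ?_⟩
  have h9 : (3 ^ (1 + 1) : ℕ) • Point.some _ _ h1 = 0 := by
    rw [show (3 ^ (1+1) : ℕ) = 3 * 3 from rfl, mul_nsmul, hQ3, h3R]
  have hn3 : ¬ (3 ^ 1 : ℕ) • Point.some _ _ h1 = 0 := by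
    rw [pow_one, hQ3]
    exact some_ne_zero _
  simpa using addOrderOf_eq_prime_pow hn3 h9


lemma forward [CharP k 3] (a₆ : k) (ha₆ : a₆ ≠ 0) (P : (Wc a₆).Point)
    (hP : addOrderOf P = 9) : ∃ u : k, a₆ = u ^ 3 - u := by
  have h3 : (3 : k) = 0 := CharP.cast_eq_zero k 3
  have h9 : (9 : ℕ) • P = 0 := by rw [← hP]; exact addOrderOf_nsmul_eq_zero P
  have hdvd : ∀ n : ℕ, n • P = 0 → (9 : ℕ) ∣ n := fun n h => by
    rw [← hP]; exact addOrderOf_dvd_of_nsmul_eq_zero h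
  cases P with
  | zero =>
      rw [← zero_def, addOrderOf_zero] at hP
      norm_num at hP
  | @some x y hxy =>
      have heq : y ^ 2 = x ^ 3 + x ^ 2 + a₆ := equation_iff''.1 hxy.1
      have hy : y ≠ 0 := by
        intro h
        have h2P : Point.some _ _ hxy + Point.some _ _ hxy = 0 :=
          add_self_of_Y_eq (by rw [negY_eq, h]; ring)
        have := hdvd 2 (by rw [two_nsmul]; exact h2P)
        norm_num at this
      obtain ⟨h2', e2⟩ := double_eq h3 hxy hy
      obtain ⟨X2c, hX2cd⟩ : ∃ t : k, t = (x / y) ^ 2 - 1 - 2 * x := ⟨_, rfl⟩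
      obtain ⟨Y2c, hY2cd⟩ : ∃ t : k, t = -(x / y * (X2c - x) + y) := ⟨_, rfl⟩
      have hX2e : (x / y) ^ 2 - 1 - 2 * x = X2c := hX2cd.symm
      have hY2e : -(x / y * ((x / y) ^ 2 - 1 - 2 * x - x) + y) = Y2c := by
        rw [hY2cd, hX2cd]
      rw [hY2e, hX2e] at h2'
      have e2n : Point.some _ _ hxy + Point.some _ _ hxy = Point.some _ _ h2' :=
        e2.trans (some_eq_some hX2e hY2e)
      have hx12 : x ≠ X2c := by
        intro hxe
        rcases Y_eq_of_X_eq hxy.1 h2'.1 hxe with hyy | hyy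
        · have h' := e2n.trans (some_eq_some (h₂ := hxy) hxe.symm hyy.symm)
          have h'' : Point.some _ _ hxy + Point.some _ _ hxy = Point.some _ _ hxy + 0 := by
            rw [add_zero]; exact h'
          exact some_ne_zero hxy (add_left_cancel h'')
        · rw [negY_eq] at hyy
          have henq : Y2c = (Wc a₆).negY x y := by
            rw [negY_eq]; linear_combination hyy
          have h' := e2n.trans ((some_eq_some hxe.symm henq).trans (neg_some hxy).symm)
          have h3P : (3 : ℕ) • Point.some _ _ hxy = 0 := by
            rw [show (3:ℕ) = 2 + 1 from rfl, add_nsmul, two_nsmul, one_nsmul, h',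
              neg_add_cancel]
          have := hdvd 3 h3P
          norm_num at this
      obtain ⟨h3', e3⟩ := addp_eq hxy h2' hx12
      obtain ⟨xi, hxid⟩ : ∃ t : k,
          t = ((y - Y2c) / (x - X2c)) ^ 2 - 1 - x - X2c := ⟨_, rfl⟩
      obtain ⟨eta, hetad⟩ : ∃ t : k,
          t = -((y - Y2c) / (x - X2c) * (xi - x) + y) := ⟨_, rfl⟩
      have hX3e : ((y - Y2c) / (x - X2c)) ^ 2 - 1 - x - X2c = xi := hxid.symm
      have hY3e : -((y - Y2c) / (x - X2c) * (((y - Y2c) / (x - X2c)) ^ 2 - 1 - x - X2c - x) + y)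
          = eta := by rw [hetad, hxid]
      rw [hY3e, hX3e] at h3'
      have e3n : Point.some _ _ hxy + Point.some _ _ h2' = Point.some _ _ h3' :=
        e3.trans (some_eq_some hX3e hY3e)
      have hR3 : (3 : ℕ) • Point.some _ _ hxy = Point.some _ _ h3' := by
        rw [show (3:ℕ) = 2 + 1 from rfl, add_nsmul, two_nsmul, one_nsmul, e2n, add_comm]
        exact e3n
      have h3R : (3 : ℕ) • Point.some _ _ h3' = 0 := by
        rw [← hR3, smul_smul]
        simpa using h9
      have hR0 : Point.some _ _ h3' ≠ 0 := some_ne_zero h3'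
      have heta : eta ≠ 0 := by
        intro h
        have h2R : Point.some _ _ h3' + Point.some _ _ h3' = 0 :=
          add_self_of_Y_eq (by rw [negY_eq, h]; ring)
        apply hR0
        have := h3R
        rw [show (3:ℕ) = 2 + 1 from rfl, add_nsmul, two_nsmul, one_nsmul, h2R,
          zero_add] at this
        exact this
      have h2Rneg : Point.some _ _ h3' + Point.some _ _ h3' = -Point.some _ _ h3' := by
        apply eq_neg_of_add_eq_zero_left
        have := h3R
        rwa [show (3:ℕ) = 2 + 1 from rfl, add_nsmul, two_nsmul, one_nsmul] at this
      obtain ⟨hr2', er2⟩ := double_eq h3 h3' heta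
      have hinj := some_inj (er2.symm.trans (h2Rneg.trans (neg_some h3')))
      have hc1 : (xi / eta) ^ 2 - 1 - 2 * xi = xi := hinj.1
      have hxiSq : xi ^ 2 = eta ^ 2 := by
        field_simp at hc1
        linear_combination hc1 + xi * eta ^ 2 * h3
      have heqR : eta ^ 2 = xi ^ 3 + xi ^ 2 + a₆ := equation_iff''.1 h3'.1
      have hxi3 : xi ^ 3 = -a₆ := by linear_combination -heqR - hxiSq
      have hxi0 : xi ≠ 0 := fun h => ha₆ (by
        rw [h, zero_pow (by norm_num)] at hxi3
        exact neg_eq_zero.mp hxi3.symm)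
      -- polynomial relations
      have hdne : x - X2c ≠ 0 := sub_ne_zero.mpr hx12
      obtain ⟨L2, hL2d⟩ : ∃ t : k, t = (y - Y2c) / (x - X2c) := ⟨_, rfl⟩
      rw [← hL2d] at hxid
      have hX2p : X2c * y ^ 2 = x ^ 2 - y ^ 2 - 2 * x * y ^ 2 := by
        rw [hX2cd]
        field_simp
      have hY2p : Y2c * y = -(x * (X2c - x) + y ^ 2) := by
        rw [hY2cd]
        field_simp
      have hR4 : L2 * (x - X2c) = y - Y2c := by
        rw [hL2d]; exact div_mul_cancel₀ _ hdne
      have hL2sq : L2 ^ 2 * (x - X2c) ^ 2 = (y - Y2c) ^ 2 := by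
        linear_combination (L2 * (x - X2c) + (y - Y2c)) * hR4
      have hstarM : xi * (x^3 + a₆)^2 * ((x - X2c)^2 * y^6)
          = (x^9 - a₆*x^3 + a₆^3) * ((x - X2c)^2 * y^6) := by
        linear_combination ((y^6*a₆^2*X2c^2 + (-2)*x*y^6*a₆^2*X2c + x^2*y^6*a₆^2 + (2)*x^3*y^6*a₆*X2c^2 + (-4)*x^4*y^6*a₆*X2c + (2)*x^5*y^6*a₆ + x^6*y^6*X2c^2 + (-2)*x^7*y^6*X2c + x^8*y^6)) * hxid + ((y^6*a₆^2 + (2)*x^3*y^6*a₆ + x^6*y^6)) * hL2sq + ((y^5*a₆^2*Y2c + (-3)*y^6*a₆^2 + (-1)*x*y^4*a₆^2*X2c + x^2*y^4*a₆^2 + (2)*x^3*y^5*a₆*Y2c + (-6)*x^3*y^6*a₆ + (-2)*x^4*y^4*a₆*X2c + (2)*x^5*y^4*a₆ + x^6*y^5*Y2c + (-3)*x^6*y^6 + (-1)*x^7*y^4*X2c + x^8*y^4)) * hY2p + (((-1)*y^4*a₆^2*X2c^2 + y^4*a₆^3 + (-1)*y^4*a₆^3*X2c + (3)*x*y^4*a₆^2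 + (3)*x*y^4*a₆^2*X2c + (4)*x*y^4*a₆^3 + (-1)*x^2*y^2*a₆^3 + (-5)*x^2*y^4*a₆^2 + x^3*y^2*a₆^2 + (-1)*x^3*y^4*a₆ + x^3*y^4*a₆*X2c + (-2)*x^3*y^4*a₆*X2c^2 + (2)*x^4*y^4*a₆ + (6)*x^4*y^4*a₆*X2c + x^5*y^2*a₆ + (-10)*x^5*y^4*a₆ + (2)*x^6*y^2*a₆ + (-1)*x^6*y^4*X2c^2 + (3)*x^7*y^4 + (3)*x^7*y^4*X2c + (-5)*x^8*y^4 + x^9*y^2 + x^9*y^4 + (-1)*x^9*y^4*X2c + (4)*x^10*y^4 + (-1)*x^11*y^2)) * hX2p + (((3)*a₆^5 + (3)*y^2*a₆^4 + (3)*y^4*a₆^3 + (4)*y^6*a₆^2 + (-3)*x*a₆^4 + (-6)*x*a₆^5 + (-3)*x*y^2*a₆^3 + (-6)*x*y^2*a₆^4 + (-3)*x*y^4*a₆^2 + (-6)*x*y^4*a₆^3 + (6)*x^2*a₆^4 + (-9)*x^2*a₆^5 + (3)*x^2*y^2*a₆^3 + (-9)*x^2*y^2*a₆^4 + (-2)*x^2*y^4*a₆^2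 + (-9)*x^2*y^4*a₆^3 + (-3)*x^3*a₆^3 + (21)*x^3*a₆^4 + (24)*x^3*y^2*a₆^3 + x^3*y^4*a₆ + (21)*x^3*y^4*a₆^2 + (8)*x^3*y^6*a₆ + (-12)*x^4*a₆^3 + (-30)*x^4*a₆^4 + (-11)*x^4*y^2*a₆^2 + (-15)*x^4*y^2*a₆^3 + (51)*x^5*a₆^3 + (-18)*x^5*a₆^4 + (-1)*x^5*y^2*a₆ + (24)*x^5*y^2*a₆^2 + (-9)*x^5*y^2*a₆^3 + (5)*x^5*y^4*a₆ + (-12)*x^6*a₆^2 + (60)*x^6*a₆^3 + (-1)*x^6*y^2*a₆ + (51)*x^6*y^2*a₆^2 + (30)*x^6*y^4*a₆ + (4)*x^6*y^6 + (3)*x^7*a₆^2 + (-24)*x^7*a₆^3 + (-10)*x^7*y^2*a₆ + (-3)*x^7*y^4 + (108)*x^8*a₆^2 + (-9)*x^8*a₆^3 + (33)*x^8*y^2*a₆ + (-2)*x^8*y^4 + (-12)*x^9*a₆ + (93)*x^9*a₆^2 + (-1)*x^9*y^2 + (42)*x^9*y^2*a₆ + (12)*x^9*y^4 + (12)*x^10*a₆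 + (-6)*x^10*a₆^2 + (-11)*x^10*y^2 + (-6)*x^10*y^2*a₆ + (-6)*x^10*y^4 + (87)*x^11*a₆ + (-9)*x^11*a₆^2 + (12)*x^11*y^2 + (-9)*x^11*y^2*a₆ + (-9)*x^11*y^4 + (-12)*x^12 + (48)*x^12*a₆ + (12)*x^12*y^2 + (-30)*x^13*a₆ + (-15)*x^13*y^2 + (24)*x^14 + (-18)*x^14*a₆ + (-9)*x^14*y^2 + (-3)*x^15 + (-24)*x^16 + (-9)*x^17)) * heq + ((a₆^6 + (-1)*x*a₆^5 + (-2)*x*a₆^6 + (3)*x^2*a₆^5 + (-3)*x^2*a₆^6 + (-2)*x^3*a₆^4 + (6)*x^3*a₆^5 + (-3)*x^4*a₆^4 + (-15)*x^4*a₆^5 + (-1)*x^5*a₆^3 + (26)*x^5*a₆^4 + (-9)*x^5*a₆^5 + (-9)*x^6*a₆^3 + (17)*x^6*a₆^4 + (14)*x^7*a₆^3 + (-24)*x^7*a₆^4 + (-4)*x^8*a₆^2 + (73)*x^8*a₆^3 + (-9)*x^8*a₆^4 + (-7)*x^9*a₆^2 + (43)*x^9*a₆^3 + (41)*x^10*a₆^2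 + (-13)*x^10*a₆^3 + (-4)*x^11*a₆ + (96)*x^11*a₆^2 + (-6)*x^11*a₆^3 + (-4)*x^12*a₆ + (45)*x^12*a₆^2 + (33)*x^13*a₆ + (-15)*x^13*a₆^2 + (-4)*x^14 + (53)*x^14*a₆ + (-9)*x^14*a₆^2 + (-4)*x^15 + (5)*x^15*a₆ + (8)*x^16 + (-24)*x^16*a₆ + (7)*x^17 + (-9)*x^17*a₆ + (-9)*x^18 + (-11)*x^19 + (-3)*x^20)) * h3
      have hSne : (x - X2c)^2 * y^6 ≠ 0 := mul_ne_zero (pow_ne_zero 2 hdne) (pow_ne_zero 6 hy)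
      have hstar : xi * (x^3 + a₆)^2 = x^9 - a₆*x^3 + a₆^3 := mul_right_cancel₀ hSne hstarM
      have hcubic : x^9 - xi*x^6 + (xi^3 + 2*xi^4)*x^3 - xi^9 - xi^7 = 0 := by
        linear_combination -hstar + (((-1)*xi^4 + (-1)*xi^6 + a₆*xi + a₆*xi^3 + (-1)*a₆^2 + x^3 + (2)*x^3*xi)) * hxi3
      refine ⟨(-x^6 + x^3*(xi + xi^2 - xi^3) - xi^5 - xi^6) / xi^3, ?_⟩
      have key : a₆ * xi^9 = (-x^6 + x^3*(xi + xi^2 - xi^3) - xi^5 - xi^6)^3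
          - (-x^6 + x^3*(xi + xi^2 - xi^3) - xi^5 - xi^6) * xi^6 := by
        linear_combination ((xi^9)) * hxi3 + ((xi^4 + (5)*xi^5 + (-1)*xi^6 + (-11)*xi^7 + (-3)*xi^8 + (8)*xi^9 + x^3*xi^2 + (2)*x^3*xi^3 + (-2)*x^3*xi^4 + (-3)*x^3*xi^5 + (6)*x^3*xi^6 + (-2)*x^6*xi + (-3)*x^6*xi^2 + (3)*x^6*xi^3 + x^9)) * hcubic + ((xi^12 + (-2)*xi^14 + (-1)*xi^15 + (3)*xi^18 + (-2)*x^3*xi^8 + (-3)*x^3*xi^9 + (5)*x^3*xi^10 + (7)*x^3*xi^11 + (-4)*x^3*xi^12 + (-6)*x^3*xi^13 + (3)*x^3*xi^15 + x^6*xi^8 + (-1)*x^6*xi^9 + (-3)*x^6*xi^10 + (3)*x^6*xi^12)) * h3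
      field_simp
      linear_combination key

end Stmt9Aux

open Classical in
/-- Over a perfect field `k` of characteristic `3`, the elliptic curve `Y² = X³ + X² + a₆`
(with `a₆ ≠ 0`) has a `k`-rational point of order `9` if and only if `a₆ = u³ - u` for some
`u ∈ k`. -/
theorem stmt9 {k : Type*} [Field k] [CharP k 3] [PerfectField k] (a₆ : k) (ha₆ : a₆ ≠ 0) :
    (∃ P : (WeierstrassCurve.mk 0 1 0 0 a₆ : WeierstrassCurve k).toAffine.Point,
        addOrderOf P = 9) ↔
      ∃ u : k, a₆ = u ^ 3 - u := by
  constructor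
  · rintro ⟨P, hP⟩
    exact Stmt9Aux.forward a₆ ha₆ P hP
  · rintro ⟨u, hu⟩
    exact Stmt9Aux.backward a₆ ha₆ u hu
end

section
/- Let k be a field of characteristic 3, let a₆ ∈ k with a₆ ≠ 0, and let W be the elliptic curve over k given by Y² = X³ + X² + a₆. Let P = (x, y) be a k-rational affine point of W with x³ + a₆ ≠ 0. Then 3·P (in the group of k-rational points of W) is an affine point whose X-coordinate equals (x⁹ − a₆x³ + a₆³)/(x³ + a₆)². -/
open WeierstrassCurve.Affine

lemma key {F : Type*} [Field F] {W : WeierstrassCurve.Affine F} {x₁ x₂ y : F}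
    (hx : x₁ = x₂) (h1 : W.Nonsingular x₁ y) {P : W.Point} (hP : P = .some _ _ h1) :
    ∃ (y' : F) (h' : W.Nonsingular x₂ y'), P = .some _ _ h' := by
  subst hx; exact ⟨y, h1, hP⟩

open Classical in
set_option maxHeartbeats 4000000 in
/-- Triplication formula in characteristic `3`: for an affine point `P = (x, y)` on the elliptic
curve `Y² = X³ + X² + a₆` with `x³ + a₆ ≠ 0`, the point `3 • P` is affine with `X`-coordinate
`(x⁹ - a₆x³ + a₆³) / (x³ + a₆)²`. -/
theorem stmt10 {k : Type*} [Field k] [CharP k 3] (a₆ : k) (ha₆ : a₆ ≠ 0) (x y : k)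
    (h : (WeierstrassCurve.mk 0 1 0 0 a₆ : WeierstrassCurve k).toAffine.Nonsingular x y)
    (hx : x ^ 3 + a₆ ≠ 0) :
    ∃ (y' : k)
      (h' : (WeierstrassCurve.mk 0 1 0 0 a₆ : WeierstrassCurve k).toAffine.Nonsingular
        ((x ^ 9 - a₆ * x ^ 3 + a₆ ^ 3) / (x ^ 3 + a₆) ^ 2) y'),
      3 • WeierstrassCurve.Affine.Point.some _ _ h = WeierstrassCurve.Affine.Point.some _ _ h' := by
  set W := (WeierstrassCurve.mk 0 1 0 0 a₆ : WeierstrassCurve k).toAffine with hW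
  have h3 : (3 : k) = 0 := CharP.cast_eq_zero k 3
  have hE : y ^ 2 = x ^ 3 + x ^ 2 + a₆ := by
    have := ((W.equation_iff x y).mp h.1)
    simpa [hW] using this
  have h2 : (2 : k) ≠ 0 := by
    intro h2; apply (one_ne_zero (α := k)); linear_combination h3 - h2
  have h3P : (3 : ℕ) • Point.some _ _ h = Point.some _ _ h + Point.some _ _ h + Point.some _ _ h := by
    rw [succ_nsmul, two_nsmul]
  by_cases hy : y = 0
  · subst hy
    have hdbl : Point.some _ _ h + Point.some _ _ h = 0 :=
      Point.add_self_of_Y_eq (by simp [negY, hW])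
    have h3eq : (3 : ℕ) • Point.some _ _ h = Point.some _ _ h := by
      rw [h3P, hdbl, zero_add]
    have htar : x = (x ^ 9 - a₆ * x ^ 3 + a₆ ^ 3) / (x ^ 3 + a₆) ^ 2 := by
      rw [eq_div_iff (pow_ne_zero 2 hx)]
      linear_combination ((3:k)*a₆ + a₆^2 - 4*x*a₆ + 2*x^2*a₆ - x^3*a₆ - x^5 + x^6) * hE
        - (-a₆^2 + x*a₆^2 - x^2*a₆ - x^2*a₆^2) * h3
    exact key htar h h3eq
  · have hy' : y ≠ W.negY x y := by
      simp only [negY, hW]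
      intro hc
      exact hy (by apply mul_left_cancel₀ h2; linear_combination hc)
    have hdbl := Point.add_self_of_Y_ne (h₁ := h) hy'
    have hL : W.slope x x y y = x / y := by
      rw [slope_of_Y_ne rfl hy']
      simp only [negY, hW]
      rw [div_eq_div_iff (by intro hc; apply hy; apply mul_left_cancel₀ h2; linear_combination hc) hy]
      linear_combination x^2*y*h3
    have hx2 : W.addX x x (W.slope x x y y) ≠ x := by
      intro heq
      apply hx
      rw [hL] at heq
      simp only [addX, hW] at heq
      field_simp at heq
      linear_combination -heq - hE - x*y^2*h3
    have htrip : (3 : ℕ) • Point.some _ _ h =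
        Point.some _ _ (nonsingular_add (nonsingular_add h h fun hc => hy' hc.2) h
          fun hc => (hx2 hc.1).elim) := by
      rw [h3P, hdbl]; exact Point.add_of_X_ne hx2
    refine key ?_ _ htrip
    rw [slope_of_X_ne hx2, hL]
    simp only [addX, addY, negAddY, negY, hW]
    have hyne : y ≠ 0 := hy
    have hd2 : x ^ 2 - y ^ 2 - y ^ 2 * x - y ^ 2 * x - y ^ 2 * x ≠ 0 := by
      intro hc; apply hx
      linear_combination -hc - hE - x*y^2*h3
    have hd3 : x * (x + y * 0) - y ^ 2 - x * y ^ 2 - x * y ^ 2 - x * y ^ 2 ≠ 0 := by intro hc; apply hd2; linear_combination hc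
    field_simp [hd3, hy]
    apply mul_left_cancel₀ (pow_ne_zero 6 hy)
    linear_combination (norm := ring1) ((3)*a₆^8 + (3)*y^2*a₆^7 + (3)*y^4*a₆^6 + (3)*y^6*a₆^5 + (3)*y^8*a₆^4 + (3)*y^10*a₆^3 + (4)*y^12*a₆^2 + (-3)*x*a₆^7 + (-6)*x*a₆^8 + (-3)*x*y^2*a₆^6 + (-6)*x*y^2*a₆^7 + (-3)*x*y^4*a₆^5 + (-6)*x*y^4*a₆^6 + (-3)*x*y^6*a₆^4 + (-6)*x*y^6*a₆^5 + (-3)*x*y^8*a₆^3 + (-6)*x*y^8*a₆^4 + (-3)*x*y^10*a₆^2 + (-6)*x*y^10*a₆^3 + (15)*x^2*a₆^7 + (-9)*x^2*a₆^8 + (12)*x^2*y^2*a₆^6 + (-9)*x^2*y^2*a₆^7 + (9)*x^2*y^4*a₆^5 + (-9)*x^2*y^4*a₆^6 + (6)*x^2*y^6*a₆^4 + (-9)*x^2*y^6*a₆^5 + (3)*x^2*y^8*a₆^3 + (-9)*x^2*y^8*a₆^4 + (-2)*x^2*y^10*a₆^2 + (-9)*x^2*y^10*a₆^3 + (-12)*x^3*a₆^6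 + (12)*x^3*a₆^7 + (-9)*x^3*y^2*a₆^5 + (15)*x^3*y^2*a₆^6 + (-6)*x^3*y^4*a₆^4 + (18)*x^3*y^4*a₆^5 + (-3)*x^3*y^6*a₆^3 + (21)*x^3*y^6*a₆^4 + (24)*x^3*y^8*a₆^3 + x^3*y^10*a₆ + (21)*x^3*y^10*a₆^2 + (8)*x^3*y^12*a₆ + (6)*x^4*a₆^6 + (-75)*x^4*a₆^7 + (-3)*x^4*y^2*a₆^5 + (-60)*x^4*y^2*a₆^6 + (-9)*x^4*y^4*a₆^4 + (-45)*x^4*y^4*a₆^5 + (-12)*x^4*y^6*a₆^3 + (-30)*x^4*y^6*a₆^4 + (-11)*x^4*y^8*a₆^2 + (-15)*x^4*y^8*a₆^3 + (-18)*x^5*a₆^5 + (132)*x^5*a₆^6 + (-45)*x^5*a₆^7 + (-9)*x^5*y^2*a₆^4 + (105)*x^5*y^2*a₆^5 + (-36)*x^5*y^2*a₆^6 + (-3)*x^5*y^4*a₆^3 + (78)*x^5*y^4*a₆^4 + (-27)*x^5*y^4*a₆^5 + (51)*x^5*y^6*a₆^3 + (-18)*x^5*y^6*a₆^4 + (-1)*x^5*y^8*a₆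 + (24)*x^5*y^8*a₆^2 + (-9)*x^5*y^8*a₆^3 + (5)*x^5*y^10*a₆ + (-54)*x^6*a₆^5 + (-21)*x^6*a₆^6 + (-42)*x^6*y^2*a₆^4 + (24)*x^6*y^2*a₆^5 + (-27)*x^6*y^4*a₆^3 + (51)*x^6*y^4*a₆^4 + (-12)*x^6*y^6*a₆^2 + (60)*x^6*y^6*a₆^3 + (-1)*x^6*y^8*a₆ + (51)*x^6*y^8*a₆^2 + (30)*x^6*y^10*a₆ + (4)*x^6*y^12 + (-12)*x^7*a₆^4 + (213)*x^7*a₆^5 + (-240)*x^7*a₆^6 + (-3)*x^7*y^2*a₆^3 + (111)*x^7*y^2*a₆^4 + (-144)*x^7*y^2*a₆^5 + (42)*x^7*y^4*a₆^3 + (-72)*x^7*y^4*a₆^4 + (3)*x^7*y^6*a₆^2 + (-24)*x^7*y^6*a₆^3 + (-10)*x^7*y^8*a₆ + (-3)*x^7*y^10 + (-93)*x^8*a₆^4 + (477)*x^8*a₆^5 + (-90)*x^8*a₆^6 + (-42)*x^8*y^2*a₆^3 + (348)*x^8*y^2*a₆^4 + (-54)*x^8*y^2*a₆^5 + (-12)*x^8*y^4*a₆^2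 + (219)*x^8*y^4*a₆^3 + (-27)*x^8*y^4*a₆^4 + (108)*x^8*y^6*a₆^2 + (-9)*x^8*y^6*a₆^3 + (33)*x^8*y^8*a₆ + (-2)*x^8*y^10 + (-3)*x^9*a₆^3 + (63)*x^9*a₆^4 + (-12)*x^9*a₆^5 + (-6)*x^9*y^2*a₆^3 + (108)*x^9*y^2*a₆^4 + (-21)*x^9*y^4*a₆^2 + (129)*x^9*y^4*a₆^3 + (-12)*x^9*y^6*a₆ + (93)*x^9*y^6*a₆^2 + (-1)*x^9*y^8 + (42)*x^9*y^8*a₆ + (12)*x^9*y^10 + (-57)*x^10*a₆^3 + (843)*x^10*a₆^4 + (-336)*x^10*a₆^5 + (-12)*x^10*y^2*a₆^2 + (384)*x^10*y^2*a₆^3 + (-138)*x^10*y^2*a₆^4 + (123)*x^10*y^4*a₆^2 + (-39)*x^10*y^4*a₆^3 + (12)*x^10*y^6*a₆ + (-6)*x^10*y^6*a₆^2 + (-11)*x^10*y^8 + (-6)*x^10*y^8*a₆ + (-6)*x^10*y^10 + (-93)*x^11*a₆^3 + (1092)*x^11*a₆^4 + (-99)*x^11*a₆^5 + (-45)*x^11*y^2*a₆^2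 + (636)*x^11*y^2*a₆^3 + (-45)*x^11*y^2*a₆^4 + (-12)*x^11*y^4*a₆ + (288)*x^11*y^4*a₆^2 + (-18)*x^11*y^4*a₆^3 + (87)*x^11*y^6*a₆ + (-9)*x^11*y^6*a₆^2 + (12)*x^11*y^8 + (-9)*x^11*y^8*a₆ + (-9)*x^11*y^10 + (-12)*x^12*a₆^2 + (468)*x^12*a₆^3 + (195)*x^12*a₆^4 + (90)*x^12*y^2*a₆^2 + (225)*x^12*y^2*a₆^3 + (-12)*x^12*y^4*a₆ + (135)*x^12*y^4*a₆^2 + (-12)*x^12*y^6 + (48)*x^12*y^6*a₆ + (12)*x^12*y^8 + (-69)*x^13*a₆^2 + (1530)*x^13*a₆^3 + (-285)*x^13*a₆^4 + (-12)*x^13*y^2*a₆ + (510)*x^13*y^2*a₆^2 + (-102)*x^13*y^2*a₆^3 + (99)*x^13*y^4*a₆ + (-45)*x^13*y^4*a₆^2 + (-30)*x^13*y^6*a₆ + (-15)*x^13*y^8 + (9)*x^14*a₆^2 + (1443)*x^14*a₆^3 + (-90)*x^14*a₆^4 + (-36)*x^14*y^2*a₆ + (582)*x^14*y^2*a₆^2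 + (-45)*x^14*y^2*a₆^3 + (-12)*x^14*y^4 + (159)*x^14*y^4*a₆ + (-27)*x^14*y^4*a₆^2 + (24)*x^14*y^6 + (-18)*x^14*y^6*a₆ + (-9)*x^14*y^8 + (-12)*x^15*a₆ + (675)*x^15*a₆^2 + (228)*x^15*a₆^3 + (75)*x^15*y^2*a₆ + (105)*x^15*y^2*a₆^2 + (-12)*x^15*y^4 + (15)*x^15*y^4*a₆ + (-3)*x^15*y^6 + (-60)*x^16*a₆ + (1374)*x^16*a₆^2 + (-291)*x^16*a₆^3 + (-12)*x^16*y^2 + (282)*x^16*y^2*a₆ + (-144)*x^16*y^2*a₆^2 + (24)*x^16*y^4 + (-72)*x^16*y^4*a₆ + (-24)*x^16*y^6 + (15)*x^17*a₆ + (882)*x^17*a₆^2 + (-99)*x^17*a₆^3 + (-24)*x^17*y^2 + (195)*x^17*y^2*a₆ + (-54)*x^17*y^2*a₆^2 + (21)*x^17*y^4 + (-27)*x^17*y^4*a₆ + (-9)*x^17*y^6 + (-12)*x^18 + (369)*x^18*a₆ + (-123)*x^18*a₆^2 + (12)*x^18*y^2 + (-84)*x^18*y^2*a₆ + (-27)*x^18*y^4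 + (-36)*x^19 + (522)*x^19*a₆ + (-330)*x^19*a₆^2 + (45)*x^19*y^2 + (-132)*x^19*y^2*a₆ + (-33)*x^19*y^4 + (-12)*x^20 + (105)*x^20*a₆ + (-90)*x^20*a₆^2 + (-6)*x^20*y^2 + (-36)*x^20*y^2*a₆ + (-9)*x^20*y^4 + (57)*x^21 + (-276)*x^21*a₆ + (-60)*x^21*y^2 + (39)*x^22 + (-210)*x^22*a₆ + (-42)*x^22*y^2 + (-66)*x^23 + (-45)*x^23*a₆ + (-9)*x^23*y^2 + (-102)*x^24 + (-51)*x^25 + (-9)*x^26) * hE + (a₆^9 + (-1)*x*a₆^8 + (-2)*x*a₆^9 + (6)*x^2*a₆^8 + (-3)*x^2*a₆^9 + (-5)*x^3*a₆^7 + (3)*x^3*a₆^8 + (6)*x^4*a₆^7 + (-30)*x^4*a₆^8 + (-10)*x^5*a₆^6 + (53)*x^5*a₆^7 + (-18)*x^5*a₆^8 + (-20)*x^6*a₆^6 + (-28)*x^6*a₆^7 + (-10)*x^7*a₆^5 + (117)*x^7*a₆^6 + (-120)*x^7*a₆^7 + (-55)*x^8*a₆^5 + (196)*x^8*a₆^6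 + (-45)*x^8*a₆^7 + (-5)*x^9*a₆^4 + (74)*x^9*a₆^5 + (-91)*x^9*a₆^6 + (-54)*x^10*a₆^4 + (511)*x^10*a₆^5 + (-222)*x^10*a₆^6 + (-1)*x^11*a₆^3 + (-41)*x^11*a₆^4 + (519)*x^11*a₆^5 + (-63)*x^11*a₆^6 + (-24)*x^12*a₆^3 + (458)*x^12*a₆^4 + (-51)*x^12*a₆^5 + (-73)*x^13*a₆^3 + (1155)*x^13*a₆^4 + (-240)*x^13*a₆^5 + (-4)*x^14*a₆^2 + (128)*x^14*a₆^3 + (910)*x^14*a₆^4 + (-63)*x^14*a₆^5 + (-31)*x^15*a₆^2 + (891)*x^15*a₆^3 + (46)*x^15*a₆^4 + (-40)*x^16*a₆^2 + (1449)*x^16*a₆^3 + (-222)*x^16*a₆^4 + (-4)*x^17*a₆ + (233)*x^17*a₆^2 + (851)*x^17*a₆^3 + (-63)*x^17*a₆^4 + (-28)*x^18*a₆ + (806)*x^18*a₆^2 + (-62)*x^18*a₆^3 + (-27)*x^19*a₆ + (926)*x^19*a₆^2 + (-240)*x^19*a₆^3 + (-4)*x^20 + (124)*x^20*a₆ + (288)*x^20*a₆^2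 + (-63)*x^20*a₆^3 + (-16)*x^21 + (316)*x^21*a₆ + (-243)*x^21*a₆^2 + (-16)*x^22 + (222)*x^22*a₆ + (-210)*x^22*a₆^2 + (15)*x^23 + (-79)*x^23*a₆ + (-45)*x^23*a₆^2 + (32)*x^24 + (-196)*x^24*a₆ + (-9)*x^25 + (-102)*x^25*a₆ + (-56)*x^26 + (-18)*x^26*a₆ + (-51)*x^27 + (-20)*x^28 + (-3)*x^29) * h3
end

section
/- Let F be a field of characteristic different from 2 and 3, and suppose s ∈ F satisfies s² = −3. Let K = F(T) be the field of rational functions over F, and let E be the elliptic curve over K given by Y² = X³ − 27T³(T+8)X + 54T⁴(T² − 20T − 8). Then the affine point (−9T², 12T²(T−1)s) is a K-rational point of order 3 on E. -/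
open WeierstrassCurve.Affine WeierstrassCurve.Affine.Point

open Classical in
/-- Let `F` be a field of characteristic different from `2` and `3` containing a square root `s`
of `-3`, and let `K = F(T)`. Then `(-9T², 12T²(T-1)s)` is a `K`-rational point of order `3` on the
elliptic curve `Y² = X³ - 27T³(T+8)X + 54T⁴(T² - 20T - 8)`. -/
theorem stmt13 {F : Type*} [Field F] (h2 : (2 : F) ≠ 0) (h3 : (3 : F) ≠ 0)
    (s : F) (hs : s ^ 2 = -3) :
    letI K := RatFunc F
    letI T : K := RatFunc.X
    letI E : WeierstrassCurve K :=
      ⟨0, 0, 0, -27 * T ^ 3 * (T + 8), 54 * T ^ 4 * (T ^ 2 - 20 * T - 8)⟩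
    ∃ h : E.toAffine.Nonsingular (-9 * T ^ 2)
        (12 * T ^ 2 * (T - 1) * algebraMap F K s),
      addOrderOf (WeierstrassCurve.Affine.Point.some _ _ h) = 3 := by
  set K := RatFunc F
  set T : K := RatFunc.X with hT
  set E : WeierstrassCurve K :=
    ⟨0, 0, 0, -27 * T ^ 3 * (T + 8), 54 * T ^ 4 * (T ^ 2 - 20 * T - 8)⟩ with hE
  set c : K := algebraMap F K s with hcdef
  have hFK : Function.Injective (algebraMap F K) := (algebraMap F K).injective
  have hc : c ^ 2 = -3 := by
    rw [hcdef, ← map_pow, hs, map_neg, map_ofNat]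
  have h2K : (2 : K) ≠ 0 := fun h => h2 (hFK (by simp only [map_ofNat, _root_.map_zero]; exact h))
  have h3K : (3 : K) ≠ 0 := fun h => h3 (hFK (by simp only [map_ofNat, _root_.map_zero]; exact h))
  have hcne : c ≠ 0 := by
    intro h
    rw [h] at hc
    exact h3K (by linear_combination hc)
  have hTne : T ≠ 0 := RatFunc.X_ne_zero
  have hT1 : T - 1 ≠ 0 := by
    have : (Polynomial.X - 1 : Polynomial F) ≠ 0 := by
      simpa using Polynomial.X_sub_C_ne_zero (1 : F)
    simpa using RatFunc.algebraMap_ne_zero this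
  set x : K := -9 * T ^ 2 with hx
  set y : K := 12 * T ^ 2 * (T - 1) * c with hy
  have hyne : y ≠ 0 := by
    rw [hy]
    refine mul_ne_zero (mul_ne_zero (mul_ne_zero ?_ (pow_ne_zero 2 hTne)) hT1) hcne
    intro h
    apply h2K
    have h12 : (12 : K) = 2 * 2 * 3 := by norm_num
    rw [h12] at h
    rcases mul_eq_zero.mp h with h' | h'
    · rcases mul_eq_zero.mp h' with h'' | h'' <;> exact h''
    · exact absurd h' h3K
  have hW : E.toAffine.Nonsingular x y := by
    rw [WeierstrassCurve.Affine.nonsingular_iff, WeierstrassCurve.Affine.equation_iff]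
    refine ⟨?_, Or.inr ?_⟩
    · show y ^ 2 + 0 * x * y + 0 * y =
        x ^ 3 + 0 * x ^ 2 + (-27 * T ^ 3 * (T + 8)) * x + (54 * T ^ 4 * (T ^ 2 - 20 * T - 8))
      rw [hx, hy]
      linear_combination (144 * T ^ 4 * (T - 1) ^ 2) * hc
    · show y ≠ E.toAffine.negY x y
      rw [WeierstrassCurve.Affine.negY]
      show y ≠ -y - 0 * x - 0
      intro h
      apply hyne
      have : 2 * y = 0 := by linear_combination h
      exact (mul_eq_zero.mp this).resolve_left h2K
  have hy' : y ≠ E.toAffine.negY x y := by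
    rw [WeierstrassCurve.Affine.negY]
    show y ≠ -y - 0 * x - 0
    intro h
    apply hyne
    have : 2 * y = 0 := by linear_combination h
    exact (mul_eq_zero.mp this).resolve_left h2K
  refine ⟨hW, ?_⟩
  set P : E.toAffine.Point := Point.some _ _ hW with hP
  have hnegY : E.toAffine.negY x y = -y := by
    rw [WeierstrassCurve.Affine.negY]; show -y - 0 * x - 0 = -y; ring
  have hL : E.toAffine.slope x x y y = -3 * T * c := by
    rw [WeierstrassCurve.Affine.slope_of_Y_ne rfl hy', hnegY]
    show (3 * x ^ 2 + 2 * 0 * x + (-27 * T ^ 3 * (T + 8)) - 0 * y) / (y - -y) = -3 * T * c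
    rw [div_eq_iff (by rw [sub_neg_eq_add, ← two_mul]; exact mul_ne_zero h2K hyne)]
    rw [hx, hy]
    linear_combination (72 * T ^ 3 * (T - 1)) * hc
  have hxadd : E.toAffine.addX x x (E.toAffine.slope x x y y) = x := by
    rw [hL, WeierstrassCurve.Affine.addX]
    show (-3 * T * c) ^ 2 + 0 * (-3 * T * c) - 0 - x - x = x
    rw [hx]
    linear_combination 9 * T ^ 2 * hc
  have hyadd : E.toAffine.addY x x y (E.toAffine.slope x x y y) = E.toAffine.negY x y := by
    rw [hnegY, hL, WeierstrassCurve.Affine.addY, WeierstrassCurve.Affine.negY,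
      WeierstrassCurve.Affine.negAddY, WeierstrassCurve.Affine.addX]
    show -((-3 * T * c) * (((-3 * T * c) ^ 2 + 0 * (-3 * T * c) - 0 - x - x - x)) + y)
        - 0 * ((-3 * T * c) ^ 2 + 0 * (-3 * T * c) - 0 - x - x) - 0 = -y
    rw [hx]
    linear_combination (27 * T ^ 3 * c) * hc
  have hPP : P + P = Point.some _ _ (nonsingular_add hW hW fun h => hy' h.2) :=
    WeierstrassCurve.Affine.Point.add_self_of_Y_ne hy'
  have h3P : P + P + P = 0 := by
    rw [hPP]
    exact WeierstrassCurve.Affine.Point.add_of_Y_eq hxadd (by rw [hyadd])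
  have hPne : P ≠ 0 := fun h => by simpa [hP] using h
  haveI : Fact (Nat.Prime 3) := ⟨by norm_num⟩
  apply addOrderOf_eq_prime
  · show 3 • P = 0
    rw [show (3 : ℕ) = 2 + 1 from rfl, add_nsmul, two_nsmul, one_nsmul, h3P]
  · exact hPne
end

section
/- Let F_q be a finite field of characteristic 2 and let K = F_q(T) be the field of rational functions over F_q. Let E be the elliptic curve over K given by Y² + XY = X³ + (1/T)X² + (T−1)/T⁴. Then the affine point (1/T, 1/T²) is a K-rational point of order 3 on E. -/
open WeierstrassCurve WeierstrassCurve.Affine WeierstrassCurve.Affine.Point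

open Classical in
/-- Let `F_q` be a finite field of characteristic `2` and `K = F_q(T)`. Then `(1/T, 1/T²)` is a
`K`-rational point of order `3` on the elliptic curve `Y² + XY = X³ + (1/T)X² + (T-1)/T⁴`. -/
theorem stmt14 {Fq : Type*} [Field Fq] [Fintype Fq] [CharP Fq 2] :
    letI K := RatFunc Fq
    letI T : K := RatFunc.X
    letI E : WeierstrassCurve K := ⟨1, 1 / T, 0, 0, (T - 1) / T ^ 4⟩
    ∃ h : E.toAffine.Nonsingular (1 / T) (1 / T ^ 2),
      addOrderOf (WeierstrassCurve.Affine.Point.some _ _ h) = 3 := by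
  set K := RatFunc Fq
  set T : K := RatFunc.X with hTdef
  set E : WeierstrassCurve K := ⟨1, 1 / T, 0, 0, (T - 1) / T ^ 4⟩ with hE
  have hT : T ≠ 0 := RatFunc.X_ne_zero
  have hu : T * T⁻¹ = 1 := mul_inv_cancel₀ hT
  haveI : CharP K 2 := charP_of_injective_algebraMap (algebraMap Fq K).injective 2
  have h2 : (2 : K) = 0 := by
    have := CharP.cast_eq_zero K 2
    push_cast at this
    exact this
  have ha₁ : E.a₁ = 1 := rfl
  have ha₂ : E.a₂ = 1 / T := rfl
  have ha₃ : E.a₃ = 0 := rfl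
  have ha₄ : E.a₄ = 0 := rfl
  have ha₆ : E.a₆ = (T - 1) / T ^ 4 := rfl
  have heq : E.toAffine.Equation (1 / T) (1 / T ^ 2) := by
    rw [equation_iff, ha₁, ha₂, ha₃, ha₄, ha₆]
    linear_combination (T⁻¹ ^ 4 - T⁻¹ ^ 3) * h2 - T⁻¹ ^ 3 * hu
  have hy : (1 / T ^ 2 : K) ≠ E.toAffine.negY (1 / T) (1 / T ^ 2) := by
    intro hc
    rw [negY, ha₁, ha₃] at hc
    exact one_div_ne_zero hT (by linear_combination hc - (1 / T ^ 2) * h2)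
  have h : E.toAffine.Nonsingular (1 / T) (1 / T ^ 2) := by
    refine (E.toAffine.nonsingular_iff _ _).mpr ⟨heq, Or.inr ?_⟩
    rw [ha₁, ha₃]
    intro hc
    exact hy (by rw [negY, ha₁, ha₃]; linear_combination hc)
  set L := E.toAffine.slope (1 / T) (1 / T) (1 / T ^ 2) (1 / T ^ 2) with hLdef
  have hL : L = 0 := by
    rw [hLdef, slope_of_Y_ne rfl hy, ha₁, ha₂, ha₄, negY, ha₁, ha₃, div_eq_zero_iff]
    left
    linear_combination (2 / T ^ 2) * h2
  have hx3 : E.toAffine.addX (1 / T) (1 / T) L = 1 / T := by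
    rw [hL, addX, ha₁, ha₂]
    linear_combination (-(2 / T)) * h2
  have hy3 : E.toAffine.addY (1 / T) (1 / T) (1 / T ^ 2) L =
      E.toAffine.negY (1 / T) (1 / T ^ 2) := by
    rw [addY, negAddY, hx3, hL, negY, negY, ha₁, ha₃]
    ring
  have hadd : some _ _ h + some _ _ h = some _ _ (nonsingular_add h h fun hxy => hy hxy.right) :=
    add_self_of_Y_ne hy
  have h3 : (3 : ℕ) • some _ _ h = (0 : E.toAffine.Point) := by
    rw [show (3 : ℕ) = 2 + 1 from rfl, add_nsmul, two_nsmul, one_nsmul, hadd]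
    exact add_of_Y_eq hx3 hy3
  haveI : Fact (Nat.Prime 3) := ⟨by norm_num⟩
  exact ⟨h, addOrderOf_eq_prime h3 (by simp [WeierstrassCurve.Affine.Point.zero_def])⟩
end

section
/- Let q be a power of 3 with q ≥ 9 and let F_q be the finite field with q elements. Then the number of pairs (w, u) ∈ F_q × F_q satisfying u³ − u = w³ − w² is strictly less than 3(q − 2). -/
open Polynomial Finset

/-- The "trace" of `u^3 - u` vanishes: telescoping sum. -/
lemma tr_aux {Fq : Type*} [Field Fq] [Fintype Fq] [CharP Fq 3]
    (n : ℕ) (hn : Fintype.card Fq = 3 ^ n) (u : Fq) :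
    ∑ i ∈ Finset.range n, (u ^ 3 - u) ^ (3 ^ i) = 0 := by
  have h1 : ∀ i, (u ^ 3 - u) ^ (3 ^ i) = u ^ (3 ^ (i + 1)) - u ^ (3 ^ i) := by
    intro i
    rw [sub_pow_char_pow, ← pow_mul, pow_succ, mul_comm (3 ^ i) 3, pow_mul]
  simp_rw [h1]
  rw [Finset.sum_range_sub (fun i => u ^ (3 ^ i))]
  have : u ^ (3 ^ n) = u := by rw [← hn]; exact FiniteField.pow_card u
  simp [this]

/-- If `u^3 - u = w^3 - w^2` then `w` is a root of `∑ (X^2 - X)^(3^i)`. -/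
lemma key_aux {Fq : Type*} [Field Fq] [Fintype Fq] [CharP Fq 3]
    (n : ℕ) (hn : Fintype.card Fq = 3 ^ n) (w u : Fq)
    (h : u ^ 3 - u = w ^ 3 - w ^ 2) :
    ∑ i ∈ Finset.range n, (w ^ 2 - w) ^ (3 ^ i) = 0 := by
  have h0 : ∑ i ∈ Finset.range n, (w ^ 3 - w ^ 2) ^ (3 ^ i) = 0 := by
    rw [← h]; exact tr_aux n hn u
  have hsplit : ∀ (a b : Fq) (i : ℕ),
      (a - b) ^ (3 ^ i) = a ^ (3 ^ i) - b ^ (3 ^ i) := fun a b i => sub_pow_char_pow a b i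
  have h3 : ∑ i ∈ Finset.range n, (w ^ 3) ^ (3 ^ i)
      = ∑ i ∈ Finset.range n, w ^ (3 ^ i) := by
    have hterm : ∀ i, (w ^ 3) ^ (3 ^ i) = w ^ (3 ^ (i + 1)) := by
      intro i; rw [← pow_mul, pow_succ, mul_comm (3 ^ i) 3, pow_mul]
    simp_rw [hterm]
    have tele : ∑ i ∈ Finset.range n, (w ^ 3 ^ (i + 1) - w ^ 3 ^ i)
        = w ^ 3 ^ n - w ^ 3 ^ 0 := Finset.sum_range_sub (fun i => w ^ (3 ^ i)) n
    have hw : w ^ (3 ^ n) = w := by rw [← hn]; exact FiniteField.pow_card w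
    rw [Finset.sum_sub_distrib, hw, pow_zero, pow_one, sub_self, sub_eq_zero] at tele
    exact tele
  simp_rw [hsplit] at h0 ⊢
  rw [Finset.sum_sub_distrib] at h0 ⊢
  rw [h3] at h0
  rw [sub_eq_zero] at h0 ⊢
  exact h0.symm

/-- If `F_q` is a finite field of characteristic `3` with `q ≥ 9` elements, then the number of
pairs `(w, u) ∈ F_q × F_q` with `u³ - u = w³ - w²` is strictly less than `3(q - 2)`. -/
theorem stmt15 {Fq : Type*} [Field Fq] [Fintype Fq] [CharP Fq 3] [DecidableEq Fq]
    (hq : 9 ≤ Fintype.card Fq) :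
    (Finset.univ.filter fun p : Fq × Fq => p.2 ^ 3 - p.2 = p.1 ^ 3 - p.1 ^ 2).card <
      3 * (Fintype.card Fq - 2) := by
  obtain ⟨n, hp3, hcard⟩ := FiniteField.card Fq 3
  -- the trace polynomial
  set R : Fq[X] := ∑ i ∈ Finset.range (n : ℕ), ((X : Fq[X]) ^ 2 - X) ^ (3 ^ i) with hR
  have hmon2 : ((X : Fq[X]) ^ 2 - X).Monic := by
    apply monic_X_pow_sub
    rw [degree_X]
    exact_mod_cast one_lt_two
  have hnd2 : ((X : Fq[X]) ^ 2 - X).natDegree = 2 := by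
    compute_degree!
  -- m := n - 1
  obtain ⟨m, hm⟩ : ∃ m : ℕ, (n : ℕ) = m + 1 := ⟨(n : ℕ) - 1, (Nat.succ_pred_eq_of_pos n.pos).symm⟩
  have hRmonic : R.Monic := by
    rw [hR, hm, Finset.sum_range_succ]
    apply Polynomial.Monic.add_of_right (hmon2.pow _)
    have hdeg_big : ((((X : Fq[X]) ^ 2 - X)) ^ (3 ^ m)).degree = ((2 * 3 ^ m : ℕ) : WithBot ℕ) := by
      rw [Polynomial.degree_eq_natDegree (hmon2.pow _).ne_zero, natDegree_pow, hnd2, mul_comm]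
    rw [hdeg_big]
    apply lt_of_le_of_lt (Polynomial.degree_sum_le _ _)
    rw [Finset.sup_lt_iff (by exact_mod_cast WithBot.bot_lt_coe _)]
    intro i hi
    have : ((((X : Fq[X]) ^ 2 - X)) ^ (3 ^ i)).degree = ((2 * 3 ^ i : ℕ) : WithBot ℕ) := by
      rw [Polynomial.degree_eq_natDegree (hmon2.pow _).ne_zero, natDegree_pow, hnd2, mul_comm]
    rw [this]
    have hlt : (3:ℕ) ^ i < 3 ^ m := Nat.pow_lt_pow_right (by norm_num) (Finset.mem_range.mp hi)
    exact_mod_cast (by omega : 2 * 3 ^ i < 2 * 3 ^ m)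
  have hRdeg : R.natDegree ≤ 2 * 3 ^ m := by
    rw [hR]
    apply Polynomial.natDegree_sum_le_of_forall_le
    intro i hi
    rw [natDegree_pow, hnd2, mul_comm]
    have : i < (n : ℕ) := Finset.mem_range.mp hi
    exact Nat.mul_le_mul_left 2 (Nat.pow_le_pow_right (by norm_num) (by omega))
  set A := Finset.univ.filter fun p : Fq × Fq => p.2 ^ 3 - p.2 = p.1 ^ 3 - p.1 ^ 2 with hA
  set B := R.roots.toFinset with hB
  -- every first coordinate of a point is a root of R
  have hmaps : ∀ p ∈ A, p.1 ∈ B := by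
    intro p hp
    rw [hA, Finset.mem_filter] at hp
    rw [hB, Multiset.mem_toFinset, mem_roots hRmonic.ne_zero]
    have hz := key_aux (n : ℕ) hcard p.1 p.2 hp.2
    rw [IsRoot.def, hR, eval_finset_sum]
    simpa using hz
  -- each fiber has at most 3 points
  have hfiber : ∀ w : Fq, (A.filter fun p => p.1 = w).card ≤ 3 := by
    intro w
    set g : Fq[X] := X ^ 3 - X - C (w ^ 3 - w ^ 2) with hg
    have hgdeg : g.natDegree = 3 := by rw [hg]; compute_degree!
    have hgne : g ≠ 0 := fun h => by simp [h] at hgdeg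
    have hsub : (A.filter fun p => p.1 = w).card ≤ g.roots.toFinset.card := by
      apply Finset.card_le_card_of_injOn (fun p => p.2)
      · intro p hp
        rw [Finset.mem_coe, Finset.mem_filter, hA, Finset.mem_filter] at hp
        rw [Finset.mem_coe, Multiset.mem_toFinset, mem_roots hgne, IsRoot.def, hg]
        have := hp.1.2
        rw [hp.2] at this
        simp [this]
      · intro p hp p' hp' hpp
        rw [Finset.mem_coe, Finset.mem_filter] at hp hp'
        exact Prod.ext (hp.2.trans hp'.2.symm) hpp
    calc (A.filter fun p => p.1 = w).card ≤ g.roots.toFinset.card := hsub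
      _ ≤ Multiset.card g.roots := Multiset.toFinset_card_le _
      _ ≤ g.natDegree := card_roots' g
      _ = 3 := hgdeg
  have hmain : A.card ≤ 3 * B.card :=
    Finset.card_le_mul_card_image_of_maps_to hmaps 3 (fun b _ => hfiber b)
  have hBcard : B.card ≤ 2 * 3 ^ m := by
    calc B.card ≤ Multiset.card R.roots := Multiset.toFinset_card_le _
      _ ≤ R.natDegree := card_roots' R
      _ ≤ 2 * 3 ^ m := hRdeg
  have h2q : A.card ≤ 2 * Fintype.card Fq := by
    calc A.card ≤ 3 * B.card := hmain
      _ ≤ 3 * (2 * 3 ^ m) := by omega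
      _ = 2 * 3 ^ (m + 1) := by ring
      _ = 2 * Fintype.card Fq := by rw [hcard, hm]
  omega
end

section
/- Let q be a power of 4, let F_q be the finite field with q elements (so F_q has characteristic 2 and contains the field with 4 elements), and let K = F_q(T). Let E be the elliptic curve over K given by Y² + TXY + Y = X³ + T³ + 1. Then all 3-torsion points of E are K-rational; that is, the set of K-rational points P of E with 3·P = O has exactly 9 elements. -/
open WeierstrassCurve Polynomial

section Helpers

variable {K : Type*} [Field K] [DecidableEq K] {W : WeierstrassCurve.Affine K}

private lemma my_some_congr {x₁ y₁ x₂ y₂ : K} (h₁ : W.Nonsingular x₁ y₁)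
    (h₂ : W.Nonsingular x₂ y₂) (hx : x₁ = x₂) (hy : y₁ = y₂) :
    Affine.Point.some _ _ h₁ = Affine.Point.some _ _ h₂ := by
  subst hx; subst hy; rfl

private lemma my_some_inj {x₁ y₁ x₂ y₂ : K} {h₁ : W.Nonsingular x₁ y₁} {h₂ : W.Nonsingular x₂ y₂}
    (h : Affine.Point.some _ _ h₁ = Affine.Point.some _ _ h₂) : x₁ = x₂ ∧ y₁ = y₂ := by
  cases h; exact ⟨rfl, rfl⟩

private lemma my_some_ne_x {x₁ y₁ x₂ y₂ : K} {h₁ : W.Nonsingular x₁ y₁} {h₂ : W.Nonsingular x₂ y₂}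
    (hx : x₁ ≠ x₂) : Affine.Point.some _ _ h₁ ≠ Affine.Point.some _ _ h₂ :=
  fun h => hx (my_some_inj h).1

private lemma my_some_ne_y {x₁ y₁ x₂ y₂ : K} {h₁ : W.Nonsingular x₁ y₁} {h₂ : W.Nonsingular x₂ y₂}
    (hy : y₁ ≠ y₂) : Affine.Point.some _ _ h₁ ≠ Affine.Point.some _ _ h₂ :=
  fun h => hy (my_some_inj h).2

private lemma my_addY_eq_negY {x y l : K} (hX : W.addX x x l = x) :
    W.addY x x y l = W.negY x y := by
  rw [Affine.addY, Affine.negAddY, hX, sub_self, mul_zero, zero_add]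

private lemma my_addX_iff {x y : K} (hy : y ≠ W.negY x y) :
    W.addX x x (W.slope x x y y) = x ↔
      (3 * x ^ 2 + 2 * W.a₂ * x + W.a₄ - W.a₁ * y) ^ 2
        + W.a₁ * ((3 * x ^ 2 + 2 * W.a₂ * x + W.a₄ - W.a₁ * y) * (y - W.negY x y))
        - W.a₂ * (y - W.negY x y) ^ 2 - 3 * x * (y - W.negY x y) ^ 2 = 0 := by
  have hB : y - W.negY x y ≠ 0 := sub_ne_zero.mpr hy
  rw [Affine.addX, Affine.slope_of_Y_ne rfl hy]
  rw [div_pow, ← sub_eq_zero]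
  set N := 3 * x ^ 2 + 2 * W.a₂ * x + W.a₄ - W.a₁ * y
  set D := y - W.negY x y
  constructor
  · intro h
    field_simp at h
    apply mul_left_cancel₀ hB
    linear_combination D * h
  · intro h
    field_simp
    linear_combination h

private lemma my_tors {x y : K} (h : W.Nonsingular x y) (hy : y ≠ W.negY x y)
    (hX : W.addX x x (W.slope x x y y) = x) : 3 • (Affine.Point.some _ _ h) = 0 := by
  have hY : W.addY x x y (W.slope x x y y) = W.negY x y := my_addY_eq_negY hX
  have hPP : Affine.Point.some _ _ h + Affine.Point.some _ _ h = -Affine.Point.some _ _ h := by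
    rw [Affine.Point.add_self_of_Y_ne hy, Affine.Point.neg_some]
    exact my_some_congr _ _ hX hY
  have h3 : (3 : ℕ) • Affine.Point.some _ _ h
      = (Affine.Point.some _ _ h + Affine.Point.some _ _ h) + Affine.Point.some _ _ h := by
    rw [show (3 : ℕ) = 2 + 1 from rfl, add_nsmul, two_nsmul, one_nsmul]
  rw [h3, hPP, neg_add_cancel]

private lemma my_tors_neg {P : W.Point} (h : 3 • P = 0) : 3 • (-P) = 0 := by
  have : (3 : ℕ) • (-P) = -((3 : ℕ) • P) := by abel
  rw [this, h, neg_zero]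

private lemma cube_root {Fq : Type*} [Field Fq] [Fintype Fq] [CharP Fq 2]
    (hq : ∃ n : ℕ, Fintype.card Fq = 4 ^ n) : ∃ c : Fq, c ^ 2 + c + 1 = 0 := by
  classical
  obtain ⟨n, hn⟩ := hq
  have h3 : (3 : ℕ) ∣ Fintype.card Fqˣ := by
    rw [Fintype.card_units, hn]
    have : 4 ^ n % 3 = 1 := by rw [Nat.pow_mod]; simp
    omega
  obtain ⟨ζ, hζ⟩ := exists_prime_orderOf_dvd_card (G := Fqˣ) 3 h3
  have h1 : ζ ^ 3 = 1 := by rw [← hζ]; exact pow_orderOf_eq_one ζ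
  have hne : (ζ : Fq) ≠ 1 := by
    intro h
    have : ζ = 1 := Units.ext h
    rw [this, orderOf_one] at hζ; norm_num at hζ
  refine ⟨(ζ : Fq), ?_⟩
  have h1' : (ζ : Fq) ^ 3 = 1 := by rw [← Units.val_pow_eq_pow_val, h1, Units.val_one]
  have hfac : ((ζ : Fq) - 1) * ((ζ : Fq) ^ 2 + ζ + 1) = 0 := by linear_combination h1'
  rcases mul_eq_zero.mp hfac with h | h
  · exact absurd h (sub_ne_zero.mpr hne)
  · exact h

end Helpers

open Classical in
/-- Let `F_q` be a finite field whose cardinality is a power of `4` (so of characteristic `2`,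
containing `F₄`), and let `K = F_q(T)`. Then all `3`-torsion points of the elliptic curve
`Y² + TXY + Y = X³ + T³ + 1` over `K` are `K`-rational: the set of `K`-rational points `P` with
`3 • P = 0` has exactly `9` elements. -/
theorem stmt19 {Fq : Type*} [Field Fq] [Fintype Fq] [CharP Fq 2]
    (hq : ∃ n : ℕ, Fintype.card Fq = 4 ^ n) :
    letI K := RatFunc Fq
    letI T : K := RatFunc.X
    letI E : WeierstrassCurve K := ⟨T, 0, 1, 0, T ^ 3 + 1⟩
    {P : E.toAffine.Point | 3 • P = 0}.ncard = 9 := by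
  obtain ⟨c, hc⟩ := cube_root hq
  set K := RatFunc Fq
  set T : K := RatFunc.X with hT
  set E : WeierstrassCurve K := ⟨T, 0, 1, 0, T ^ 3 + 1⟩ with hE
  have ha1 : E.toAffine.a₁ = T := rfl
  have ha2 : E.toAffine.a₂ = 0 := rfl
  have ha3 : E.toAffine.a₃ = 1 := rfl
  have ha4 : E.toAffine.a₄ = 0 := rfl
  have ha6 : E.toAffine.a₆ = T ^ 3 + 1 := rfl
  haveI : CharP K 2 := charP_of_injective_algebraMap (algebraMap Fq K).injective 2
  have h2 : (2 : K) = 0 := by exact_mod_cast CharP.cast_eq_zero K 2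
  have h2q : (2 : Fq) = 0 := by exact_mod_cast CharP.cast_eq_zero Fq 2
  set φ : Fq[X] →+* K := (algebraMap Fq[X] K : Fq[X] →+* K) with hφdef
  have hφ : Function.Injective φ := RatFunc.algebraMap_injective Fq
  set emb : Fq →+* K := (algebraMap Fq K : Fq →+* K) with hemb
  have hembC : ∀ α : Fq, emb α = φ (C α) := by
    intro α
    show algebraMap Fq K α = algebraMap Fq[X] K (C α)
    rw [RatFunc.algebraMap_C, RatFunc.algebraMap_eq_C]
  have hTX : T = φ X := (RatFunc.algebraMap_X (K := Fq)).symm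
  have hne : ∀ p : Fq[X], p ≠ 0 → φ p ≠ 0 := fun p hp => (map_ne_zero_iff φ hφ).mpr hp
  set w : K := emb c with hwdef
  have hw : w ^ 2 + w + 1 = 0 := by
    have := congrArg emb hc
    simpa only [map_add, map_pow, map_one, map_zero] using this
  -- basic Fq facts
  have hc0 : c ≠ 0 := by intro h; rw [h] at hc; simp at hc
  have hc1 : c ≠ 1 := by
    intro h; rw [h] at hc
    exact one_ne_zero (α := Fq) (by linear_combination hc - h2q)
  have hc10 : c + 1 ≠ 0 := by
    intro h; exact hc1 (by linear_combination h - h2q)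
  -- nonvanishing machinery
  have hlinne : ∀ α β : Fq, α ≠ 0 → emb α * T + emb β ≠ 0 := by
    intro α β hα
    have heq : emb α * T + emb β = φ (C α * X + C β) := by
      rw [hembC, hembC, hTX, map_add, map_mul]
    rw [heq]
    refine hne _ fun hp => hα ?_
    simpa [coeff_C] using congrArg (fun q => q.coeff 1) hp
  have hquadne : ∀ α β γ : Fq, α ≠ 0 → emb α * T ^ 2 + emb β * T + emb γ ≠ 0 := by
    intro α β γ hα
    have heq : emb α * T ^ 2 + emb β * T + emb γ = φ (C α * X ^ 2 + C β * X + C γ) := by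
      rw [hembC, hembC, hembC, hTX, map_add, map_add, map_mul, map_mul, map_pow]
    rw [heq]
    refine hne _ fun hp => hα ?_
    simpa [coeff_C, coeff_X_pow] using congrArg (fun q => q.coeff 2) hp
  have hd0 : T ^ 3 + 1 ≠ 0 := by
    have heq : T ^ 3 + 1 = φ (X ^ 3 + 1) := by rw [hTX, map_add, map_pow, map_one]
    rw [heq]
    refine hne _ fun hp => one_ne_zero (α := Fq) ?_
    simpa [coeff_one, coeff_X_pow] using congrArg (fun q => q.coeff 3) hp
  -- discriminant
  have hΔ : E.Δ ≠ 0 := by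
    have hΔeq : E.Δ = φ (X ^ 9 + X ^ 6 + X ^ 3 + 1) := by
      simp only [WeierstrassCurve.Δ, WeierstrassCurve.b₂, WeierstrassCurve.b₄,
        WeierstrassCurve.b₆, WeierstrassCurve.b₈, hE, map_add, map_pow, map_one, ← hTX]
      linear_combination (-324 - 522 * T ^ 3 - 198 * T ^ 6 - T ^ 9 - T ^ 6 - 14) * h2
    rw [hΔeq]
    refine hne _ fun hp => one_ne_zero (α := Fq) ?_
    simpa [coeff_one, coeff_X_pow] using congrArg (fun q => q.coeff 9) hp
  -- base point nonsingularity
  have hns0 : E.toAffine.Nonsingular (T ^ 2) (w * T ^ 3 + w ^ 2) := by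
    refine (Affine.equation_iff_nonsingular_of_Δ_ne_zero (W := E.toAffine) hΔ).mp ?_
    rw [Affine.equation_iff, ha1, ha2, ha3, ha4, ha6]
    linear_combination (1 - T ^ 3 + T ^ 6 - w + 2 * w * T ^ 3 + w ^ 2) * hw
      + (-1 - T ^ 6) * h2
  have hnsa : ∀ a : K, a ^ 3 = 1 → E.toAffine.Nonsingular (a * T + a ^ 2) 1 := by
    intro a ha
    refine (Affine.equation_iff_nonsingular_of_Δ_ne_zero (W := E.toAffine) hΔ).mp ?_
    rw [Affine.equation_iff, ha1, ha2, ha3, ha4, ha6]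
    linear_combination (-1 - a ^ 3 - 3 * T * a ^ 2 - 3 * T ^ 2 * a - T ^ 3) * ha
      + (-T * a ^ 2 - T ^ 2 * a - T ^ 3) * h2
  have hw3 : w ^ 3 = 1 := by linear_combination (w - 1) * hw
  have hw13 : (w + 1) ^ 3 = 1 := by linear_combination (w + 2) * hw - h2
  have e1 : ((1 : K) * T + 1 ^ 2) = T + 1 := by ring
  have e2 : (w * T + w ^ 2) = w * T + (w + 1) := by linear_combination hw + (-w - 1) * h2
  have e3 : ((w + 1) * T + (w + 1) ^ 2) = (w + 1) * T + w := by linear_combination hw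
  have hns1 : E.toAffine.Nonsingular (T + 1) 1 := e1 ▸ hnsa 1 (one_pow 3)
  have hns2 : E.toAffine.Nonsingular (w * T + (w + 1)) 1 := e2 ▸ hnsa w hw3
  have hns3 : E.toAffine.Nonsingular ((w + 1) * T + w) 1 := e3 ▸ hnsa (w + 1) hw13
  -- y ≠ negY facts
  have hy0 : (w * T ^ 3 + w ^ 2) ≠ E.toAffine.negY (T ^ 2) (w * T ^ 3 + w ^ 2) := by
    rw [Affine.negY, ha1, ha3]
    intro hcon
    exact hd0 (by linear_combination -hcon + (T ^ 3 + 1 + (w * T ^ 3 + w ^ 2)) * h2)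
  have hya : ∀ x : K, T * x + 1 ≠ 0 → (1 : K) ≠ E.toAffine.negY x 1 := by
    intro x hd
    rw [Affine.negY, ha1, ha3]
    intro hcon
    exact hd (by linear_combination hcon - h2)
  have hd1 : T * (T + 1) + 1 ≠ 0 := by
    intro hcon
    refine hquadne 1 1 1 one_ne_zero ?_
    simp only [map_one]
    linear_combination hcon
  have hd2 : T * (w * T + (w + 1)) + 1 ≠ 0 := by
    intro hcon
    refine hquadne c (c + 1) 1 hc0 ?_
    simp only [map_add, map_one, ← hwdef]
    linear_combination hcon
  have hd3 : T * ((w + 1) * T + w) + 1 ≠ 0 := by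
    intro hcon
    refine hquadne (c + 1) c 1 hc10 ?_
    simp only [map_add, map_one, ← hwdef]
    linear_combination hcon
  have hy1 : (1 : K) ≠ E.toAffine.negY (T + 1) 1 := hya _ hd1
  have hy2 : (1 : K) ≠ E.toAffine.negY (w * T + (w + 1)) 1 := hya _ hd2
  have hy3 : (1 : K) ≠ E.toAffine.negY ((w + 1) * T + w) 1 := hya _ hd3
  -- x-coordinate distinctness
  have d01 : (T ^ 2 : K) ≠ T + 1 := by
    intro hcon
    refine hquadne 1 1 1 one_ne_zero ?_
    simp only [map_one]
    linear_combination hcon + (T + 1) * h2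
  have d02 : (T ^ 2 : K) ≠ w * T + (w + 1) := by
    intro hcon
    refine hquadne 1 c (c + 1) one_ne_zero ?_
    simp only [map_add, map_one, ← hwdef]
    linear_combination hcon + (w * T + w + 1) * h2
  have d03 : (T ^ 2 : K) ≠ (w + 1) * T + w := by
    intro hcon
    refine hquadne 1 (c + 1) c one_ne_zero ?_
    simp only [map_add, map_one, ← hwdef]
    linear_combination hcon + ((w + 1) * T + w) * h2
  have hcc1 : (1 + c : Fq) ≠ 0 := by
    intro h; exact hc1 (by linear_combination -h + c * h2q)
  have d12 : (T + 1 : K) ≠ w * T + (w + 1) := by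
    intro hcon
    refine hlinne (1 + c) c hcc1 ?_
    simp only [map_add, map_one, ← hwdef]
    linear_combination hcon + (w * T + w) * h2
  have d13 : (T + 1 : K) ≠ (w + 1) * T + w := by
    intro hcon
    refine hlinne c (c + 1) hc0 ?_
    simp only [map_add, map_one, ← hwdef]
    linear_combination hcon + (w * T + w) * h2
  have d23 : (w * T + (w + 1) : K) ≠ (w + 1) * T + w := by
    intro hcon
    refine hlinne 1 1 one_ne_zero ?_
    simp only [map_one]
    linear_combination hcon + T * h2
  -- torsion of base points
  have htors0 : 3 • (Affine.Point.some _ _ hns0) = 0 := by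
    refine my_tors hns0 hy0 ((my_addX_iff hy0).mpr ?_)
    rw [ha1, ha2, ha4, Affine.negY, ha1, ha3]
    linear_combination (-13 * T ^ 2 + 13 * T ^ 5 - 13 * T ^ 8 + 13 * w * T ^ 2
      - 26 * w * T ^ 5 - 13 * w ^ 2 * T ^ 2) * hw + (5 * T ^ 2 - 8 * T ^ 5 + 11 * T ^ 8) * h2
  have htorsa : ∀ (a : K), a ^ 3 = 1 → ∀ x : K, x = a * T + a ^ 2 → T * x + 1 ≠ 0 →
      ∀ (h : E.toAffine.Nonsingular x 1), 3 • (Affine.Point.some _ _ h) = 0 := by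
    intro a ha x hx hd h
    subst hx
    have hy : (1 : K) ≠ E.toAffine.negY (a * T + a ^ 2) 1 := hya _ hd
    refine my_tors h hy ((my_addX_iff hy).mpr ?_)
    rw [ha1, ha2, ha4, Affine.negY, ha1, ha3]
    linear_combination (9 * a ^ 2 + 9 * a ^ 5 + 21 * T * a + 36 * T * a ^ 4 + 24 * T ^ 2
        + 54 * T ^ 2 * a ^ 3 + 36 * T ^ 3 * a ^ 2 + 9 * T ^ 4 * a) * ha
      + (-9 * a ^ 2 - 3 * T * a + 11 * T ^ 2 + 10 * T ^ 3 * a ^ 2 + 4 * T ^ 4 * a) * h2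
  have htors1 : 3 • (Affine.Point.some _ _ hns1) = 0 :=
    htorsa 1 (one_pow 3) _ (by ring) (by rw [show T * (T + 1) + 1 = T * (T + 1) + 1 from rfl]; exact hd1) hns1
  have htors2 : 3 • (Affine.Point.some _ _ hns2) = 0 :=
    htorsa w hw3 _ (by linear_combination -hw + (w + 1) * h2) hd2 hns2
  have htors3 : 3 • (Affine.Point.some _ _ hns3) = 0 :=
    htorsa (w + 1) hw13 _ (by linear_combination -hw) hd3 hns3
  -- the nine points
  set S : Set E.toAffine.Point :=
    {0, .some _ _ hns0, .some _ _ ((Affine.nonsingular_neg ..).mpr hns0),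
     .some _ _ hns1, .some _ _ ((Affine.nonsingular_neg ..).mpr hns1),
     .some _ _ hns2, .some _ _ ((Affine.nonsingular_neg ..).mpr hns2),
     .some _ _ hns3, .some _ _ ((Affine.nonsingular_neg ..).mpr hns3)} with hS
  have hset : {P : E.toAffine.Point | 3 • P = 0} = S := by
    ext P
    simp only [Set.mem_setOf_eq, hS, Set.mem_insert_iff, Set.mem_singleton_iff]
    constructor
    · intro hP
      rcases P with _ | @⟨x, y, h⟩
      · exact Or.inl rfl
      right
      have h3 : Affine.Point.some _ _ h + Affine.Point.some _ _ h = -Affine.Point.some _ _ h := by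
        have hh : (Affine.Point.some _ _ h + Affine.Point.some _ _ h) + Affine.Point.some _ _ h = 0 := by
          rw [← hP, show (3 : ℕ) = 2 + 1 from rfl, add_nsmul, two_nsmul, one_nsmul]
        exact eq_neg_of_add_eq_zero_left hh
      by_cases hy : y = E.toAffine.negY x y
      · rw [Affine.Point.add_self_of_Y_eq hy] at h3
        exact absurd (neg_eq_zero.mp h3.symm) (Affine.Point.some_ne_zero h)
      rw [Affine.Point.add_self_of_Y_ne hy, Affine.Point.neg_some] at h3
      obtain ⟨hx, -⟩ := my_some_inj h3
      have hkey := (my_addX_iff hy).mp hx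
      rw [ha1, ha2, ha4, Affine.negY, ha1, ha3] at hkey
      have hg := (Affine.equation_iff x y).mp h.1
      rw [ha1, ha2, ha3, ha4, ha6] at hg
      have hquart : (x - T ^ 2) * (x - (T + 1)) * (x - (w * T + (w + 1)))
          * (x - ((w + 1) * T + w)) = 0 := by
        linear_combination hkey + (T ^ 2 + 12 * x) * hg
          + (-x + x ^ 2 - 3 * T * x + 2 * T * x ^ 2 + T ^ 2 - 4 * T ^ 2 * x + T ^ 2 * x ^ 2
             + 3 * T ^ 3 - 3 * T ^ 3 * x + 3 * T ^ 4 - T ^ 4 * x + T ^ 5) * hw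
          + (8 * x - x ^ 3 + 2 * x ^ 4 + T * x + 2 * T * x ^ 2 - T * x ^ 3 + T ^ 2 * x
             + T ^ 2 * x ^ 2 - T ^ 3 + 6 * T ^ 3 * x + T ^ 3 * x ^ 2 - T ^ 4 + w * x ^ 2
             - w * x ^ 3 + 2 * w * T * x ^ 2 - w * T * x ^ 3 - w * T ^ 2 * x
             + 2 * w * T ^ 2 * x ^ 2 - 2 * w * T ^ 3 * x + w * T ^ 3 * x ^ 2
             - w * T ^ 4 * x) * h2
      rcases mul_eq_zero.mp hquart with hq3 | hx4
      rcases mul_eq_zero.mp hq3 with hq2 | hx3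
      rcases mul_eq_zero.mp hq2 with hx1 | hx2
      · -- x = T ^ 2
        have hxv := sub_eq_zero.mp hx1
        subst hxv
        rcases Affine.Y_eq_of_X_eq h.1 hns0.1 rfl with hy' | hy'
        · exact Or.inl (my_some_congr _ _ rfl hy')
        · exact Or.inr (Or.inl (my_some_congr _ _ rfl hy'))
      · -- x = T + 1
        have hxv := sub_eq_zero.mp hx2
        subst hxv
        rcases Affine.Y_eq_of_X_eq h.1 hns1.1 rfl with hy' | hy'
        · exact Or.inr (Or.inr (Or.inl (my_some_congr _ _ rfl hy')))
        · exact Or.inr (Or.inr (Or.inr (Or.inl (my_some_congr _ _ rfl hy'))))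
      · -- x = w * T + (w + 1)
        have hxv := sub_eq_zero.mp hx3
        subst hxv
        rcases Affine.Y_eq_of_X_eq h.1 hns2.1 rfl with hy' | hy'
        · exact Or.inr (Or.inr (Or.inr (Or.inr (Or.inl (my_some_congr _ _ rfl hy')))))
        · exact Or.inr (Or.inr (Or.inr (Or.inr (Or.inr (Or.inl
            (my_some_congr _ _ rfl hy'))))))
      · -- x = (w + 1) * T + w
        have hxv := sub_eq_zero.mp hx4
        subst hxv
        rcases Affine.Y_eq_of_X_eq h.1 hns3.1 rfl with hy' | hy'
        · exact Or.inr (Or.inr (Or.inr (Or.inr (Or.inr (Or.inr (Or.inl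
            (my_some_congr _ _ rfl hy')))))))
        · exact Or.inr (Or.inr (Or.inr (Or.inr (Or.inr (Or.inr (Or.inr
            (my_some_congr _ _ rfl hy')))))))
    · intro hP
      rcases hP with rfl | rfl | rfl | rfl | rfl | rfl | rfl | rfl | rfl
      · exact nsmul_zero 3
      · exact htors0
      · rw [← Affine.Point.neg_some hns0]; exact my_tors_neg htors0
      · exact htors1
      · rw [← Affine.Point.neg_some hns1]; exact my_tors_neg htors1
      · exact htors2
      · rw [← Affine.Point.neg_some hns2]; exact my_tors_neg htors2
      · exact htors3
      · rw [← Affine.Point.neg_some hns3]; exact my_tors_neg htors3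
  rw [hset, hS]
  have hy0' := hy0
  rw [Set.ncard_insert_of_notMem, Set.ncard_insert_of_notMem,
    Set.ncard_insert_of_notMem, Set.ncard_insert_of_notMem, Set.ncard_insert_of_notMem,
    Set.ncard_insert_of_notMem, Set.ncard_insert_of_notMem, Set.ncard_insert_of_notMem,
    Set.ncard_singleton]
  · exact my_some_ne_y hy3
  · simp only [Set.mem_insert_iff, Set.mem_singleton_iff, not_or]
    exact ⟨my_some_ne_x d23, my_some_ne_x d23⟩
  · simp only [Set.mem_insert_iff, Set.mem_singleton_iff, not_or]
    exact ⟨my_some_ne_y hy2, my_some_ne_x d23, my_some_ne_x d23⟩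
  · simp only [Set.mem_insert_iff, Set.mem_singleton_iff, not_or]
    exact ⟨my_some_ne_x d12, my_some_ne_x d12, my_some_ne_x d13, my_some_ne_x d13⟩
  · simp only [Set.mem_insert_iff, Set.mem_singleton_iff, not_or]
    exact ⟨my_some_ne_y hy1, my_some_ne_x d12, my_some_ne_x d12,
      my_some_ne_x d13, my_some_ne_x d13⟩
  · simp only [Set.mem_insert_iff, Set.mem_singleton_iff, not_or]
    exact ⟨my_some_ne_x d01, my_some_ne_x d01, my_some_ne_x d02, my_some_ne_x d02,
      my_some_ne_x d03, my_some_ne_x d03⟩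
  · simp only [Set.mem_insert_iff, Set.mem_singleton_iff, not_or]
    exact ⟨my_some_ne_y hy0', my_some_ne_x d01, my_some_ne_x d01, my_some_ne_x d02,
      my_some_ne_x d02, my_some_ne_x d03, my_some_ne_x d03⟩
  · simp only [Set.mem_insert_iff, Set.mem_singleton_iff, not_or]
    exact ⟨(Affine.Point.some_ne_zero _).symm, (Affine.Point.some_ne_zero _).symm,
      (Affine.Point.some_ne_zero _).symm, (Affine.Point.some_ne_zero _).symm,
      (Affine.Point.some_ne_zero _).symm, (Affine.Point.some_ne_zero _).symm,
      (Affine.Point.some_ne_zero _).symm, (Affine.Point.some_ne_zero _).symm⟩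
end
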